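/- arXiv:2605.25897 — 3 statements merged into one kernel-verified Lean document; each statement's English description precedes it below -/
import Mathlib

section
/- Let X₁, X₂, … be i.i.d. real random variables with CDF F and E|X₁| < ∞, and fix a positive integer m and p ∈ [1, ∞). Then the p-Wasserstein distance between 𝔽_{n,m} and F_m satisfies W_p^p(𝔽_{n,m}, F_m) = (1/m) ∑_{j=1}^m |μ̂_{j:m} − μ_{j:m}(F)|^p, and W_p(𝔽_{n,m}, F_m) → 0 almost surely as n → ∞. -/
open MeasureTheory Filter Set
open scoped BoundedContinuousFunction ProbabilityTheory

noncomputable section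

/-- Density of the Beta(j, m-j+1) distribution. -/
def betaDens (m j : ℕ) (u : ℝ) : ℝ :=
  (m : ℝ) * ((m - 1).choose (j - 1) : ℝ) * u ^ (j - 1) * (1 - u) ^ (m - j)

/-- Quantile function (left-continuous generalized inverse). -/
def quantile (G : ℝ → ℝ) (p : ℝ) : ℝ :=
  sInf {x : ℝ | p ≤ G x}

/-- `G` is a cumulative distribution function on ℝ. -/
structure IsCDF (G : ℝ → ℝ) : Prop where
  mono : Monotone G
  rightCont : ∀ x, ContinuousWithinAt G (Ici x) x
  tendsto_atBot : Tendsto G atBot (nhds 0)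
  tendsto_atTop : Tendsto G atTop (nhds 1)

/-- `G` has finite mean: its quantile function is integrable on (0,1). -/
def HasFiniteMean (G : ℝ → ℝ) : Prop :=
  IntegrableOn (fun u => quantile G u) (Ioo (0:ℝ) 1)

/-- Expected j-th order statistic from a sample of size m drawn from G. -/
def muOS (m j : ℕ) (G : ℝ → ℝ) : ℝ :=
  ∫ u in Ioo (0:ℝ) 1, quantile G u * betaDens m j u

/-- The Hoeffding CDF operator `H_m`. -/
def hoeffCDF (m : ℕ) (G : ℝ → ℝ) (x : ℝ) : ℝ :=
  (m : ℝ)⁻¹ * ∑ j ∈ Finset.Icc 1 m, if muOS m j G ≤ x then (1:ℝ) else 0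

/-- The quantile-Hoeffding operator `I_m`. -/
def quantHoeff (m : ℕ) (h : ℝ → ℝ) (u : ℝ) : ℝ :=
  ∑ j ∈ Finset.Icc 1 m,
    (∫ t in Ioo (0:ℝ) 1, h t * betaDens m j t) *
      (if u ∈ Ioc (((j : ℝ) - 1) / m) ((j : ℝ) / m) then (1:ℝ) else 0)

/-- Empirical CDF of the reals `x 0, ..., x (n-1)`. -/
def ecdf (n : ℕ) (x : ℕ → ℝ) (t : ℝ) : ℝ :=
  (n : ℝ)⁻¹ * ∑ i ∈ Finset.range n, if x i ≤ t then (1:ℝ) else 0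

/-- Empirical CDF of the random sample `X 0, ..., X (n-1)`. -/
def empCDF {Ω : Type*} (X : ℕ → Ω → ℝ) (n : ℕ) (ω : Ω) : ℝ → ℝ :=
  fun t => (n : ℝ)⁻¹ * ∑ i ∈ Finset.range n, if X i ω ≤ t then (1:ℝ) else 0


section Lemmas

open scoped ENNReal NNReal Topology

/-! ### Basic quantile lemmas -/

lemma IsCDF.bddBelow_quantileSet {G : ℝ → ℝ} (hG : IsCDF G) {p : ℝ} (hp : 0 < p) :
    BddBelow {y : ℝ | p ≤ G y} := by
  obtain ⟨b, hb⟩ := eventually_atBot.1 (hG.tendsto_atBot.eventually_lt_const hp)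
  refine ⟨b, fun x hx => ?_⟩
  by_contra h
  exact absurd hx (not_le.2 (hb x (le_of_not_ge h)))

lemma IsCDF.nonempty_quantileSet {G : ℝ → ℝ} (hG : IsCDF G) {p : ℝ} (hp : p < 1) :
    {y : ℝ | p ≤ G y}.Nonempty := by
  obtain ⟨b, hb⟩ := (hG.tendsto_atTop.eventually_const_lt hp).exists
  exact ⟨b, hb.le⟩

lemma IsCDF.le_cdf_quantile_gt {G : ℝ → ℝ} (hG : IsCDF G) {p x : ℝ} (hp : 0 < p) (hp1 : p < 1)
    (hx : quantile G p < x) : p ≤ G x := by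
  obtain ⟨y, hy, hyx⟩ := exists_lt_of_csInf_lt (hG.nonempty_quantileSet hp1) hx
  exact le_trans hy (hG.mono hyx.le)

/-- Galois connection for the quantile function of a CDF. -/
lemma IsCDF.quantile_le_iff {G : ℝ → ℝ} (hG : IsCDF G) {p x : ℝ} (hp : 0 < p) (hp1 : p < 1) :
    quantile G p ≤ x ↔ p ≤ G x := by
  constructor
  · intro h
    have key : ∀ y, x < y → p ≤ G y := fun y hy =>
      hG.le_cdf_quantile_gt hp hp1 (lt_of_le_of_lt h hy)
    have h1 : Tendsto G (nhdsWithin x (Ioi x)) (nhds (G x)) :=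
      (hG.rightCont x).mono_left (nhdsWithin_mono _ (Ioi_subset_Ici le_rfl))
    refine ge_of_tendsto h1 ?_
    filter_upwards [self_mem_nhdsWithin] with y hy using key y hy
  · intro h
    exact csInf_le (hG.bddBelow_quantileSet hp) h

lemma IsCDF.monotoneOn_quantile {G : ℝ → ℝ} (hG : IsCDF G) :
    MonotoneOn (quantile G) (Ioo (0:ℝ) 1) := by
  intro a ha b hb hab
  exact le_csInf (hG.nonempty_quantileSet hb.2) fun x hx =>
    csInf_le (hG.bddBelow_quantileSet ha.1) (le_trans hab hx)

lemma IsCDF.le_quantile_of_cdf_lt {G : ℝ → ℝ} (hG : IsCDF G) {p x : ℝ} (hp1 : p < 1)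
    (hx : G x < p) : x ≤ quantile G p := by
  refine le_csInf (hG.nonempty_quantileSet hp1) (fun y hy => ?_)
  by_contra h
  exact absurd (le_trans hy (hG.mono (le_of_not_ge h))) (not_le.2 hx)


/-! ### CDFs coming from probability measures; quantile pushforward -/

lemma isCDF_toReal_Iic (μ : Measure ℝ) [IsProbabilityMeasure μ] :
    IsCDF (fun x => (μ (Iic x)).toReal) := by
  have h : (fun x => (μ (Iic x)).toReal) = ProbabilityTheory.cdf μ :=
    funext fun x => by rw [ProbabilityTheory.cdf_eq_real, measureReal_def]
  rw [h]
  exact ⟨ProbabilityTheory.monotone_cdf μ, (ProbabilityTheory.cdf μ).right_continuous,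
    ProbabilityTheory.tendsto_cdf_atBot μ, ProbabilityTheory.tendsto_cdf_atTop μ⟩

instance : IsProbabilityMeasure (volume.restrict (Ioo (0:ℝ) 1)) := by
  constructor
  simp [Real.volume_Ioo]

lemma IsCDF.aemeasurable_quantile {G : ℝ → ℝ} (hG : IsCDF G) :
    AEMeasurable (quantile G) (volume.restrict (Ioo (0:ℝ) 1)) :=
  aemeasurable_restrict_of_monotoneOn measurableSet_Ioo hG.monotoneOn_quantile

lemma IsCDF.map_quantile {G : ℝ → ℝ} (hG : IsCDF G) (μ : Measure ℝ) [IsProbabilityMeasure μ]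
    (hμ : ∀ x, (μ (Iic x)).toReal = G x) :
    Measure.map (quantile G) (volume.restrict (Ioo (0:ℝ) 1)) = μ := by
  have hq := hG.aemeasurable_quantile
  have : IsProbabilityMeasure (Measure.map (quantile G) (volume.restrict (Ioo (0:ℝ) 1))) :=
    Measure.isProbabilityMeasure_map hq
  refine Measure.ext_of_Iic _ _ (fun x => ?_)
  rw [Measure.map_apply_of_aemeasurable hq measurableSet_Iic,
    Measure.restrict_apply' measurableSet_Ioo]
  have hGx0 : 0 ≤ G x := by rw [← hμ x]; exact ENNReal.toReal_nonneg
  have hGx1 : G x ≤ 1 := by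
    rw [← hμ x]
    have h1 : (μ (Iic x)).toReal ≤ (μ univ).toReal :=
      ENNReal.toReal_mono (measure_ne_top μ _) (measure_mono (subset_univ _))
    simpa using h1
  have hset : quantile G ⁻¹' Iic x ∩ Ioo 0 1 = Iic (G x) ∩ Ioo 0 1 := by
    ext u
    simp only [mem_inter_iff, mem_preimage, mem_Iic, mem_Ioo, and_congr_left_iff, and_imp]
    intro hu0 hu1
    rw [hG.quantile_le_iff hu0 hu1]
  rw [hset]
  have hμx : μ (Iic x) = ENNReal.ofReal (G x) := by
    rw [← hμ x, ENNReal.ofReal_toReal (measure_ne_top μ _)]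
  rw [hμx]
  refine le_antisymm ?_ ?_
  · calc volume (Iic (G x) ∩ Ioo 0 1) ≤ volume (Ioc 0 (G x)) :=
        measure_mono (fun u hu => ⟨hu.2.1, hu.1⟩)
      _ = ENNReal.ofReal (G x) := by rw [Real.volume_Ioc, sub_zero]
  · calc ENNReal.ofReal (G x) = volume (Ioo 0 (G x)) := by rw [Real.volume_Ioo, sub_zero]
      _ ≤ volume (Iic (G x) ∩ Ioo 0 1) :=
        measure_mono (fun u hu => ⟨hu.2.le, hu.1, lt_of_lt_of_le hu.2 hGx1⟩)

lemma IsCDF.integrableOn_quantile_iff {G : ℝ → ℝ} (hG : IsCDF G) (μ : Measure ℝ)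
    [IsProbabilityMeasure μ] (hμ : ∀ x, (μ (Iic x)).toReal = G x) :
    IntegrableOn (fun u => quantile G u) (Ioo (0:ℝ) 1) volume ↔
      Integrable (fun x : ℝ => x) μ := by
  have h := integrable_map_measure (f := quantile G) (g := fun x : ℝ => x)
    aestronglyMeasurable_id hG.aemeasurable_quantile
  rw [hG.map_quantile μ hμ] at h
  exact h.symm

lemma IsCDF.integral_comp_quantile {G : ℝ → ℝ} (hG : IsCDF G) (μ : Measure ℝ)
    [IsProbabilityMeasure μ] (hμ : ∀ x, (μ (Iic x)).toReal = G x)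
    {φ : ℝ → ℝ} (hφ : Continuous φ) :
    ∫ u in Ioo (0:ℝ) 1, φ (quantile G u) = ∫ x, φ x ∂μ := by
  rw [← hG.map_quantile μ hμ,
    integral_map hG.aemeasurable_quantile hφ.aestronglyMeasurable]

/-! ### The empirical measure -/

def empMeasure (n : ℕ) (x : ℕ → ℝ) : Measure ℝ :=
  ((n : ℝ≥0∞))⁻¹ • ∑ i ∈ Finset.range n, Measure.dirac (x i)

lemma empMeasure_apply {n : ℕ} {x : ℕ → ℝ} {s : Set ℝ} (hs : MeasurableSet s) :
    empMeasure n x s = ((n : ℝ≥0∞))⁻¹ * ∑ i ∈ Finset.range n, s.indicator 1 (x i) := by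
  rw [empMeasure, Measure.smul_apply, Measure.finset_sum_apply, smul_eq_mul]
  congr 1
  exact Finset.sum_congr rfl fun i _ => Measure.dirac_apply' _ hs

lemma isProbabilityMeasure_empMeasure {n : ℕ} (hn : 0 < n) (x : ℕ → ℝ) :
    IsProbabilityMeasure (empMeasure n x) := by
  constructor
  rw [empMeasure_apply MeasurableSet.univ]
  simp only [indicator_univ, Pi.one_apply, Finset.sum_const, Finset.card_range, nsmul_eq_mul,
    mul_one]
  exact ENNReal.inv_mul_cancel (by exact_mod_cast hn.ne') (ENNReal.natCast_ne_top n)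

lemma empCDF_eq_toReal {Ω : Type*} (X : ℕ → Ω → ℝ) (n : ℕ) (ω : Ω) (t : ℝ) :
    empCDF X n ω t = (empMeasure n (fun i => X i ω) (Iic t)).toReal := by
  have hfin : ∀ i ∈ Finset.range n, (Iic t).indicator (1 : ℝ → ℝ≥0∞) (X i ω) ≠ ∞ := by
    intro i _
    by_cases h : X i ω ∈ Iic t <;> simp [indicator_apply, h]
  rw [empMeasure_apply measurableSet_Iic, ENNReal.toReal_mul, ENNReal.toReal_sum hfin]
  simp only [ENNReal.toReal_inv, ENNReal.toReal_natCast, empCDF]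
  congr 1
  refine Finset.sum_congr rfl fun i _ => ?_
  by_cases h : X i ω ≤ t <;> simp [indicator_apply, mem_Iic, h]

lemma isCDF_empCDF {Ω : Type*} (X : ℕ → Ω → ℝ) {n : ℕ} (hn : 0 < n) (ω : Ω) :
    IsCDF (empCDF X n ω) := by
  have := isProbabilityMeasure_empMeasure hn (fun i => X i ω)
  have h : empCDF X n ω = fun t => (empMeasure n (fun i => X i ω) (Iic t)).toReal :=
    funext fun t => empCDF_eq_toReal X n ω t
  rw [h]
  exact isCDF_toReal_Iic _

lemma integrable_empMeasure {n : ℕ} {x : ℕ → ℝ} {f : ℝ → ℝ} (hf : StronglyMeasurable f) :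
    Integrable f (empMeasure n x) := by
  rcases Nat.eq_zero_or_pos n with rfl | hn
  · simp only [empMeasure, Finset.range_zero, Finset.sum_empty, smul_zero]
    exact integrable_zero_measure
  refine Integrable.smul_measure ?_ (ENNReal.inv_ne_top.2 (by exact_mod_cast hn.ne'))
  rw [integrable_finset_sum_measure]
  intro i _
  refine ⟨hf.aestronglyMeasurable, ?_⟩
  rw [HasFiniteIntegral, lintegral_dirac' _ hf.measurable.enorm]
  exact lt_top_iff_ne_top.2 enorm_ne_top

lemma integral_empMeasure {n : ℕ} {x : ℕ → ℝ} {f : ℝ → ℝ} (hf : StronglyMeasurable f) :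
    ∫ y, f y ∂(empMeasure n x) = (n : ℝ)⁻¹ * ∑ i ∈ Finset.range n, f (x i) := by
  rw [empMeasure, integral_smul_measure, integral_finset_sum_measure
    (fun i _ => ⟨hf.aestronglyMeasurable, by
      rw [HasFiniteIntegral, lintegral_dirac' _ hf.measurable.enorm]
      exact lt_top_iff_ne_top.2 enorm_ne_top⟩)]
  simp only [integral_dirac, smul_eq_mul, ENNReal.toReal_inv, ENNReal.toReal_natCast]


/-! ### Quantile of the Hoeffding CDF and the step integral -/

lemma quantile_hoeffCDF_s14 {m : ℕ} (hm : 0 < m) (G : ℝ → ℝ)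
    (hmono : ∀ i j, 1 ≤ i → i ≤ j → j ≤ m → muOS m i G ≤ muOS m j G)
    {j : ℕ} (hj1 : 1 ≤ j) (hjm : j ≤ m) {t : ℝ}
    (ht : t ∈ Ioc (((j:ℝ) - 1) / m) ((j:ℝ) / m)) :
    quantile (hoeffCDF m G) t = muOS m j G := by
  have hm' : (0:ℝ) < m := Nat.cast_pos.2 hm
  have hmem : t ≤ hoeffCDF m G (muOS m j G) := by
    have hsub : Finset.Icc 1 j ⊆ Finset.Icc 1 m := Finset.Icc_subset_Icc_right hjm
    have h1 : ∀ i ∈ Finset.Icc 1 j,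
        (1:ℝ) ≤ (if muOS m i G ≤ muOS m j G then (1:ℝ) else 0) := by
      intro i hi
      rw [Finset.mem_Icc] at hi
      rw [if_pos (hmono i j hi.1 hi.2 hjm)]
    have h2 : (j:ℝ) ≤ ∑ i ∈ Finset.Icc 1 m, (if muOS m i G ≤ muOS m j G then (1:ℝ) else 0) := by
      calc (j:ℝ) = ∑ i ∈ Finset.Icc 1 j, (1:ℝ) := by
            simp [Nat.card_Icc]
        _ ≤ ∑ i ∈ Finset.Icc 1 j, (if muOS m i G ≤ muOS m j G then (1:ℝ) else 0) :=
            Finset.sum_le_sum h1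
        _ ≤ _ := Finset.sum_le_sum_of_subset_of_nonneg hsub
            (fun i _ _ => by positivity)
    calc t ≤ (j:ℝ) / m := ht.2
      _ = (m:ℝ)⁻¹ * j := by rw [div_eq_inv_mul]
      _ ≤ hoeffCDF m G (muOS m j G) := by
          rw [hoeffCDF]
          exact mul_le_mul_of_nonneg_left h2 (by positivity)
  have hlb : ∀ x ∈ {x : ℝ | t ≤ hoeffCDF m G x}, muOS m j G ≤ x := by
    intro x hx
    by_contra hxlt
    push_neg at hxlt
    have hle : ∀ i ∈ Finset.Icc 1 m,
        (if muOS m i G ≤ x then (1:ℝ) else 0) ≤ (if i ≤ j - 1 then (1:ℝ) else 0) := by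
      intro i hi
      rw [Finset.mem_Icc] at hi
      by_cases hij : i ≤ j - 1
      · rw [if_pos hij]
        split <;> norm_num
      · rw [if_neg hij]
        have hij' : j ≤ i := by omega
        rw [if_neg (not_le.2 (lt_of_lt_of_le hxlt (hmono j i hj1 hij' hi.2)))]
    have hsum : ∑ i ∈ Finset.Icc 1 m, (if i ≤ j - 1 then (1:ℝ) else 0) = ((j:ℝ) - 1) := by
      rw [← Finset.sum_subset (Finset.Icc_subset_Icc_right (by omega : j - 1 ≤ m))
        (fun i hi hni => ?_)]
      · have : ∀ i ∈ Finset.Icc 1 (j-1), (if i ≤ j - 1 then (1:ℝ) else 0) = 1 := by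
          intro i hi
          rw [Finset.mem_Icc] at hi
          rw [if_pos hi.2]
        rw [Finset.sum_congr rfl this, Finset.sum_const, Nat.card_Icc, nsmul_eq_mul, mul_one]
        have h2 : j - 1 + 1 - 1 = j - 1 := by omega
        rw [h2, Nat.cast_sub hj1, Nat.cast_one]
      · rw [Finset.mem_Icc] at hi hni
        rw [if_neg (by omega)]
    have hbound : hoeffCDF m G x ≤ ((j:ℝ) - 1) / m := by
      rw [hoeffCDF, div_eq_inv_mul, ← hsum]
      exact mul_le_mul_of_nonneg_left (Finset.sum_le_sum hle) (by positivity)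
    exact absurd (le_trans hx hbound) (not_le.2 ht.1)
  exact IsLeast.csInf_eq ⟨hmem, hlb⟩

lemma mem_step {m : ℕ} (hm : 0 < m) {t : ℝ} (ht : t ∈ Ioo (0:ℝ) 1) :
    ⌈t * m⌉₊ ∈ Finset.Icc 1 m ∧
      t ∈ Ioc ((((⌈t * m⌉₊ : ℕ):ℝ) - 1)/m) (((⌈t * m⌉₊ : ℕ):ℝ)/m) := by
  have hm' : (0:ℝ) < m := Nat.cast_pos.2 hm
  have htm : 0 < t * m := mul_pos ht.1 hm'
  have h1 : 1 ≤ ⌈t * m⌉₊ := Nat.one_le_ceil_iff.2 htm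
  have h2 : ⌈t * m⌉₊ ≤ m := Nat.ceil_le.2 (by nlinarith [ht.2])
  refine ⟨Finset.mem_Icc.2 ⟨h1, h2⟩, ?_, ?_⟩
  · rw [div_lt_iff₀ hm']
    have := Nat.ceil_lt_add_one (le_of_lt htm)
    linarith
  · rw [le_div_iff₀ hm']
    exact Nat.le_ceil _

lemma notmem_step {m : ℕ} {i j : ℕ} (hm : 0 < m)
    (hne : i ≠ j) {t : ℝ}
    (ht : t ∈ Ioc (((j:ℝ) - 1)/m) ((j:ℝ)/m)) :
    t ∉ Ioc (((i:ℝ) - 1)/m) ((i:ℝ)/m) := by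
  have hm' : (0:ℝ) < m := Nat.cast_pos.2 hm
  intro hti
  rcases lt_or_gt_of_ne hne with h | h
  · have h' : i + 1 ≤ j := h
    have hij : (i:ℝ) ≤ (j:ℝ) - 1 := by
      have := (Nat.cast_le (α := ℝ)).2 h'
      push_cast at this
      linarith
    have := (div_le_div_iff_of_pos_right hm').2 hij
    have h1 := hti.2
    have h2 := ht.1
    linarith
  · have h' : j + 1 ≤ i := h
    have hij : (j:ℝ) ≤ (i:ℝ) - 1 := by
      have := (Nat.cast_le (α := ℝ)).2 h'
      push_cast at this
      linarith
    have := (div_le_div_iff_of_pos_right hm').2 hij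
    have h1 := hti.1
    have h2 := ht.2
    linarith


lemma volume_step {m : ℕ} (hm : 0 < m) {j : ℕ} (hj1 : 1 ≤ j) (hjm : j ≤ m) :
    volume (Ioo (0:ℝ) 1 ∩ Ioc (((j:ℝ) - 1)/m) ((j:ℝ)/m)) = ENNReal.ofReal ((m:ℝ)⁻¹) := by
  have hm' : (0:ℝ) < m := Nat.cast_pos.2 hm
  have ha : (0:ℝ) ≤ ((j:ℝ) - 1)/m := by
    apply div_nonneg _ hm'.le
    have : (1:ℝ) ≤ (j:ℝ) := by exact_mod_cast hj1
    linarith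
  have hb : ((j:ℝ))/m ≤ 1 := by
    rw [div_le_one hm']
    exact_mod_cast hjm
  have hdiff : (j:ℝ)/m - ((j:ℝ) - 1)/m = (m:ℝ)⁻¹ := by
    field_simp
    ring
  refine le_antisymm ?_ ?_
  · calc volume (Ioo (0:ℝ) 1 ∩ Ioc (((j:ℝ) - 1)/m) ((j:ℝ)/m))
        ≤ volume (Ioc (((j:ℝ) - 1)/m) ((j:ℝ)/m)) := measure_mono inter_subset_right
      _ = ENNReal.ofReal ((m:ℝ)⁻¹) := by rw [Real.volume_Ioc, hdiff]
  · have hv : ENNReal.ofReal ((m:ℝ)⁻¹) = volume (Ioo (((j:ℝ) - 1)/m) ((j:ℝ)/m)) := by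
      rw [Real.volume_Ioo, hdiff]
    rw [hv]
    exact measure_mono (fun u hu => ⟨⟨lt_of_le_of_lt ha hu.1, lt_of_lt_of_le hu.2 hb⟩,
      hu.1, hu.2.le⟩)

lemma integral_step {m : ℕ} (hm : 0 < m) (v : ℕ → ℝ) :
    (∫ t in Ioo (0:ℝ) 1, ∑ j ∈ Finset.Icc 1 m,
        (Ioc (((j:ℝ)-1)/m) ((j:ℝ)/m)).indicator (fun _ => v j) t)
      = (m:ℝ)⁻¹ * ∑ j ∈ Finset.Icc 1 m, v j := by
  rw [integral_finset_sum _ (fun j _ => ?_)]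
  · rw [Finset.mul_sum]
    refine Finset.sum_congr rfl fun j hj => ?_
    rw [Finset.mem_Icc] at hj
    rw [setIntegral_indicator measurableSet_Ioc, setIntegral_const,
      measureReal_def, volume_step hm hj.1 hj.2, ENNReal.toReal_ofReal (by positivity), smul_eq_mul]
  · rw [integrable_indicator_iff measurableSet_Ioc]
    refine integrableOn_const (ne_of_lt ?_)
    rw [Measure.restrict_apply measurableSet_Ioc]
    exact lt_of_le_of_lt (measure_mono inter_subset_left) measure_Ioc_lt_top

/-- The key deterministic identity: the `p`-th power Wasserstein integrand is a step function. -/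
lemma wasserstein_identity {m : ℕ} (hm : 0 < m) (G1 G2 : ℝ → ℝ) (p : ℝ)
    (hmono1 : ∀ i j, 1 ≤ i → i ≤ j → j ≤ m → muOS m i G1 ≤ muOS m j G1)
    (hmono2 : ∀ i j, 1 ≤ i → i ≤ j → j ≤ m → muOS m i G2 ≤ muOS m j G2) :
    (∫ t in Ioo (0:ℝ) 1,
        |quantile (hoeffCDF m G1) t - quantile (hoeffCDF m G2) t| ^ p)
      = (m:ℝ)⁻¹ * ∑ j ∈ Finset.Icc 1 m, |muOS m j G1 - muOS m j G2| ^ p := by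
  rw [← integral_step hm (fun j => |muOS m j G1 - muOS m j G2| ^ p)]
  refine setIntegral_congr_fun measurableSet_Ioo (fun t ht => ?_)
  obtain ⟨hj₀, htj₀⟩ := mem_step hm ht
  rw [Finset.sum_eq_single ⌈t * m⌉₊]
  · rw [indicator_of_mem htj₀]
    obtain ⟨h1, h2⟩ := Finset.mem_Icc.1 hj₀
    rw [quantile_hoeffCDF_s14 hm G1 hmono1 h1 h2 htj₀, quantile_hoeffCDF_s14 hm G2 hmono2 h1 h2 htj₀]
  · intro i hi hne
    exact indicator_of_notMem (notmem_step hm hne htj₀) _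
  · intro h
    exact absurd hj₀ h


/-! ### Basic facts about the Beta densities -/

lemma continuous_betaDens (m j : ℕ) : Continuous (betaDens m j) := by
  unfold betaDens
  fun_prop

lemma betaDens_nonneg {m j : ℕ} {u : ℝ} (hu : u ∈ Ioo (0:ℝ) 1) : 0 ≤ betaDens m j u := by
  unfold betaDens
  have h1 : (0:ℝ) ≤ u := hu.1.le
  have h2 : (0:ℝ) ≤ 1 - u := by linarith [hu.2]
  positivity

lemma betaDens_le {m j : ℕ} {u : ℝ} (hu : u ∈ Ioo (0:ℝ) 1) :
    |betaDens m j u| ≤ (m : ℝ) * ((m-1).choose (j-1) : ℝ) := by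
  rw [abs_of_nonneg (betaDens_nonneg hu)]
  unfold betaDens
  have h1 : u ^ (j-1) ≤ 1 := pow_le_one₀ hu.1.le hu.2.le
  have h2 : (1-u) ^ (m-j) ≤ 1 := pow_le_one₀ (by linarith [hu.2]) (by linarith [hu.1])
  calc (m : ℝ) * ((m-1).choose (j-1) : ℝ) * u ^ (j-1) * (1 - u) ^ (m - j)
      ≤ (m : ℝ) * ((m-1).choose (j-1) : ℝ) * 1 * 1 := by
        apply mul_le_mul _ h2 (pow_nonneg (by linarith [hu.2]) _) (by positivity)
        apply mul_le_mul_of_nonneg_left h1 (by positivity)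
    _ = (m : ℝ) * ((m-1).choose (j-1) : ℝ) := by ring

lemma integrableOn_betaDens (m j : ℕ) : IntegrableOn (betaDens m j) (Ioo (0:ℝ) 1) volume :=
  ((continuous_betaDens m j).integrableOn_Ioc).mono_set Ioo_subset_Ioc_self

lemma integrableOn_mul_betaDens {f : ℝ → ℝ}
    (hint : IntegrableOn f (Ioo (0:ℝ) 1) volume) (m j : ℕ) :
    IntegrableOn (fun u => f u * betaDens m j u) (Ioo (0:ℝ) 1) volume := by
  have hb : ∀ᵐ u ∂(volume.restrict (Ioo (0:ℝ) 1)),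
      ‖betaDens m j u‖ ≤ (m : ℝ) * ((m-1).choose (j-1) : ℝ) := by
    rw [ae_restrict_iff' measurableSet_Ioo]
    exact ae_of_all _ fun u hu => betaDens_le hu
  have := Integrable.bdd_mul (c := (m : ℝ) * ((m-1).choose (j-1) : ℝ)) hint
    ((continuous_betaDens m j).aestronglyMeasurable) hb
  exact this.congr (ae_of_all _ fun u => mul_comm _ _)

/-! ### The difference of consecutive Beta densities integrates to zero -/

lemma hasDerivAt_betaAux {m j : ℕ} (hj1 : 1 ≤ j) (hjm : j + 1 ≤ m) (u : ℝ) :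
    HasDerivAt (fun u : ℝ => (Nat.choose m j : ℝ) * (u^j * (1-u)^(m-j)))
      (betaDens m j u - betaDens m (j+1) u) u := by
  have h1 : HasDerivAt (fun u : ℝ => u ^ j) ((j:ℝ) * u ^ (j-1)) u := by
    simpa using hasDerivAt_pow j u
  have h2 : HasDerivAt (fun u : ℝ => (1-u)^(m-j))
      (((m-j : ℕ):ℝ) * (1-u)^(m-j-1) * (-1)) u := by
    have hid : HasDerivAt (fun u : ℝ => 1 - u) (-1) u := by
      simpa using (hasDerivAt_id u).const_sub 1
    simpa [Function.comp_def] using (hasDerivAt_pow (m-j) (1-u)).comp u hid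
  have h3 := (h1.mul h2).const_mul (Nat.choose m j : ℝ)
  convert h3 using 1
  · rfl
  · rfl
  · rfl
  have e1nat : j * Nat.choose m j = m * Nat.choose (m-1) (j-1) := by
    have h0 := Nat.add_one_mul_choose_eq (m-1) (j-1)
    have hm1 : m - 1 + 1 = m := by omega
    have hj1' : j - 1 + 1 = j := by omega
    rw [hm1, hj1'] at h0
    rw [mul_comm]
    exact h0.symm
  have e2nat : (m - j) * Nat.choose m j = m * Nat.choose (m-1) j := by
    have hA := Nat.add_one_mul_choose_eq (m-1) j
    have hm1 : m - 1 + 1 = m := by omega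
    rw [hm1] at hA
    have hB := Nat.choose_succ_right_eq m j
    rw [mul_comm]
    exact (hA.trans hB).symm
  have e1 : (j:ℝ) * (Nat.choose m j : ℝ) = (m:ℝ) * (Nat.choose (m-1) (j-1) : ℝ) := by
    exact_mod_cast congrArg (Nat.cast : ℕ → ℝ) e1nat
  have e2 : ((m - j : ℕ):ℝ) * (Nat.choose m j : ℝ) = (m:ℝ) * (Nat.choose (m-1) j : ℝ) := by
    exact_mod_cast congrArg (Nat.cast : ℕ → ℝ) e2nat
  unfold betaDens
  have h4 : (j+1) - 1 = j := by omega
  have h5 : m - (j+1) = m - j - 1 := by omega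
  rw [h4, h5]
  linear_combination (-(u^(j-1) * (1-u)^(m-j))) * e1 + (u^j * (1-u)^(m-j-1)) * e2

lemma integral_betaDens_sub {m j : ℕ} (hj1 : 1 ≤ j) (hjm : j + 1 ≤ m) :
    (∫ u in Ioo (0:ℝ) 1, (betaDens m (j+1) u - betaDens m j u)) = 0 := by
  have hcont : Continuous (fun u => betaDens m j u - betaDens m (j+1) u) :=
    (continuous_betaDens m j).sub (continuous_betaDens m (j+1))
  have hFTC : (∫ u in (0:ℝ)..1, (betaDens m j u - betaDens m (j+1) u))
      = (Nat.choose m j : ℝ) * ((1:ℝ)^j * (1-1)^(m-j))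
        - (Nat.choose m j : ℝ) * ((0:ℝ)^j * (1-0)^(m-j)) := by
    exact intervalIntegral.integral_eq_sub_of_hasDerivAt
      (fun u _ => hasDerivAt_betaAux hj1 hjm u) (hcont.intervalIntegrable 0 1)
  have hz : (Nat.choose m j : ℝ) * ((1:ℝ)^j * (1-1)^(m-j))
      - (Nat.choose m j : ℝ) * ((0:ℝ)^j * (1-0)^(m-j)) = 0 := by
    rw [zero_pow (by omega : j ≠ 0), sub_self, zero_pow (by omega : m - j ≠ 0)]
    ring
  rw [hz] at hFTC
  rw [intervalIntegral.integral_of_le (by norm_num : (0:ℝ) ≤ 1),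
    integral_Ioc_eq_integral_Ioo] at hFTC
  have : (∫ u in Ioo (0:ℝ) 1, (betaDens m (j+1) u - betaDens m j u))
      = - ∫ u in Ioo (0:ℝ) 1, (betaDens m j u - betaDens m (j+1) u) := by
    rw [← integral_neg]
    exact setIntegral_congr_fun measurableSet_Ioo (fun u _ => by ring)
  rw [this, hFTC, neg_zero]

/-! ### Monotonicity of expected order statistics -/

lemma muOS_succ_le {m : ℕ} {G : ℝ → ℝ}
    (hq : MonotoneOn (quantile G) (Ioo (0:ℝ) 1))
    (hint : IntegrableOn (fun u => quantile G u) (Ioo (0:ℝ) 1) volume)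
    {j : ℕ} (hj1 : 1 ≤ j) (hjm : j + 1 ≤ m) :
    muOS m j G ≤ muOS m (j+1) G := by
  have hm : 0 < m := by omega
  set a : ℝ := (Nat.choose (m-1) (j-1) : ℝ) with ha_def
  set b : ℝ := (Nat.choose (m-1) j : ℝ) with hb_def
  have ha : 0 < a := by
    rw [ha_def]
    exact_mod_cast Nat.choose_pos (by omega)
  have hb : 0 < b := by
    rw [hb_def]
    exact_mod_cast Nat.choose_pos (by omega)
  set c : ℝ := a / (a + b) with hc_def
  have hc : c ∈ Ioo (0:ℝ) 1 := by
    constructor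
    · positivity
    · rw [hc_def, div_lt_one (by positivity)]
      linarith
  set q : ℝ → ℝ := fun u => quantile G u with hq_def
  set D : ℝ → ℝ := fun u => betaDens m (j+1) u - betaDens m j u with hD_def
  have hfac : ∀ u : ℝ, D u = ((m:ℝ) * u^(j-1) * (1-u)^(m-j-1)) * ((a+b)*u - a) := by
    intro u
    rw [hD_def]
    simp only [betaDens]
    have h4 : (j+1) - 1 = j := by omega
    have h5 : m - (j+1) = m - j - 1 := by omega
    have h3 : u ^ j = u^(j-1) * u := by
      rw [← pow_succ]
      congr 1
      omega
    have h6 : (1-u) ^ (m-j) = (1-u)^(m-j-1) * (1-u) := by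
      rw [← pow_succ]
      congr 1
      omega
    rw [h4, h5, h3, h6, ← ha_def, ← hb_def]
    ring
  have hsign : ∀ u ∈ Ioo (0:ℝ) 1, 0 ≤ (q u - q c) * D u := by
    intro u hu
    rw [hfac u]
    have hpre : 0 ≤ (m:ℝ) * u^(j-1) * (1-u)^(m-j-1) := by
      have h1 : (0:ℝ) ≤ u := hu.1.le
      have h2 : (0:ℝ) ≤ 1 - u := by linarith [hu.2]
      positivity
    have hkey : 0 ≤ (q u - q c) * ((a+b)*u - a) := by
      rcases le_total c u with h | h
      · have h1 : 0 ≤ q u - q c := sub_nonneg.2 (hq hc hu h)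
        have h2 : 0 ≤ (a+b)*u - a := by
          rw [hc_def, div_le_iff₀ (by positivity)] at h
          linarith
        exact mul_nonneg h1 h2
      · have h1 : q u - q c ≤ 0 := sub_nonpos.2 (hq hu hc h)
        have h2 : (a+b)*u - a ≤ 0 := by
          rw [hc_def, le_div_iff₀ (by positivity)] at h
          linarith
        nlinarith
    calc (0:ℝ) ≤ ((m:ℝ) * u^(j-1) * (1-u)^(m-j-1)) * ((q u - q c) * ((a+b)*u - a)) :=
          mul_nonneg hpre hkey
      _ = (q u - q c) * ((m:ℝ) * u^(j-1) * (1-u)^(m-j-1) * ((a+b)*u - a)) := by ring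
  have hD_int : IntegrableOn D (Ioo (0:ℝ) 1) volume :=
    (integrableOn_betaDens m (j+1)).sub (integrableOn_betaDens m j)
  have hqD_int : IntegrableOn (fun u => q u * D u) (Ioo (0:ℝ) 1) volume := by
    have := (integrableOn_mul_betaDens hint m (j+1)).sub (integrableOn_mul_betaDens hint m j)
    exact this.congr (ae_of_all _ fun u => by simp only [Pi.sub_apply]; rw [hD_def]; ring)
  have hD0 : (∫ u in Ioo (0:ℝ) 1, D u) = 0 := integral_betaDens_sub hj1 hjm
  have h0 : 0 ≤ ∫ u in Ioo (0:ℝ) 1, (q u - q c) * D u :=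
    setIntegral_nonneg measurableSet_Ioo hsign
  have hconst_int : IntegrableOn (fun u => q c * D u) (Ioo (0:ℝ) 1) volume :=
    hD_int.const_mul _
  have heq : (∫ u in Ioo (0:ℝ) 1, (q u - q c) * D u)
      = (∫ u in Ioo (0:ℝ) 1, q u * D u) - q c * ∫ u in Ioo (0:ℝ) 1, D u := by
    rw [← integral_const_mul, ← integral_sub hqD_int hconst_int]
    exact setIntegral_congr_fun measurableSet_Ioo (fun u _ => by ring)
  have hqd : (∫ u in Ioo (0:ℝ) 1, q u * D u) = muOS m (j+1) G - muOS m j G := by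
    rw [muOS, muOS, ← integral_sub (integrableOn_mul_betaDens hint m (j+1))
      (integrableOn_mul_betaDens hint m j)]
    exact setIntegral_congr_fun measurableSet_Ioo (fun u _ => by rw [hD_def]; ring)
  rw [heq, hD0, mul_zero, sub_zero, hqd] at h0
  linarith

lemma muOS_mono {m : ℕ} {G : ℝ → ℝ}
    (hq : MonotoneOn (quantile G) (Ioo (0:ℝ) 1))
    (hint : IntegrableOn (fun u => quantile G u) (Ioo (0:ℝ) 1) volume) :
    ∀ i j, 1 ≤ i → i ≤ j → j ≤ m → muOS m i G ≤ muOS m j G := by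
  intro i j hi1 hij hjm
  induction j with
  | zero => omega
  | succ k ih =>
    rcases Nat.lt_or_ge i (k+1) with h | h
    · have hk : i ≤ k := by omega
      have h1 : 1 ≤ k := by omega
      calc muOS m i G ≤ muOS m k G := ih hk (by omega)
        _ ≤ muOS m (k+1) G := muOS_succ_le hq hint h1 hjm
    · have : i = k + 1 := by omega
      rw [this]


/-! ### Pointwise convergence of quantile functions -/

lemma tendsto_quantile {G : ℝ → ℝ} {Gn : ℕ → ℝ → ℝ} (hG : IsCDF G) (hGn : ∀ n, IsCDF (Gn n))
    (hconv : ∀ r : ℚ, Tendsto (fun n => Gn n (r:ℝ)) atTop (𝓝 (G r)))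
    {u : ℝ} (hu : u ∈ Ioo (0:ℝ) 1) (hcont : ContinuousAt (quantile G) u) :
    Tendsto (fun n => quantile (Gn n) u) atTop (𝓝 (quantile G u)) := by
  rw [Metric.tendsto_atTop]
  intro ε hε
  obtain ⟨δ, hδ, hδ'⟩ := Metric.continuousAt_iff.1 hcont ε hε
  -- point below u
  set u₁ : ℝ := u - min δ u / 2 with hu₁_def
  have hu₁mem : u₁ ∈ Ioo (0:ℝ) 1 := by
    constructor
    · have : min δ u ≤ u := min_le_right _ _
      rw [hu₁_def]
      nlinarith [hu.1]
    · have : 0 < min δ u := lt_min hδ hu.1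
      rw [hu₁_def]
      nlinarith [hu.2]
  have hq₁ : quantile G u - ε < quantile G u₁ := by
    have hd : dist u₁ u < δ := by
      rw [Real.dist_eq, hu₁_def]
      have h1 : 0 < min δ u := lt_min hδ hu.1
      have h2 : min δ u ≤ δ := min_le_left _ _
      rw [abs_of_nonpos (by linarith)]
      linarith
    have := hδ' hd
    rw [Real.dist_eq, abs_lt] at this
    linarith
  -- point above u
  set u₂ : ℝ := u + min δ (1 - u) / 2 with hu₂_def
  have hu₂mem : u₂ ∈ Ioo (0:ℝ) 1 := by
    constructor
    · have : 0 < min δ (1 - u) := lt_min hδ (by linarith [hu.2])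
      rw [hu₂_def]
      nlinarith [hu.1]
    · have : min δ (1 - u) ≤ 1 - u := min_le_right _ _
      have h0 : (0:ℝ) < 1 - u := by linarith [hu.2]
      rw [hu₂_def]
      linarith
  have hq₂ : quantile G u₂ < quantile G u + ε := by
    have hd : dist u₂ u < δ := by
      rw [Real.dist_eq, hu₂_def]
      have h1 : 0 < min δ (1 - u) := lt_min hδ (by linarith [hu.2])
      have h2 : min δ (1 - u) ≤ δ := min_le_left _ _
      rw [abs_of_nonneg (by linarith)]
      linarith
    have := hδ' hd
    rw [Real.dist_eq, abs_lt] at this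
    linarith
  -- rational below
  obtain ⟨r₁, hr₁l, hr₁u⟩ := exists_rat_btwn hq₁
  have hGr₁ : G r₁ < u := by
    have h1 : G r₁ < u₁ := by
      by_contra h
      push_neg at h
      exact absurd (csInf_le (hG.bddBelow_quantileSet hu₁mem.1) h) (not_le.2 hr₁u)
    have h2 : u₁ < u := by
      rw [hu₁_def]
      have : 0 < min δ u := lt_min hδ hu.1
      linarith
    linarith
  -- rational above
  obtain ⟨r₂, hr₂l, hr₂u⟩ := exists_rat_btwn hq₂
  have hGr₂ : u < G r₂ := by
    obtain ⟨y, hy, hyr⟩ := exists_lt_of_csInf_lt (hG.nonempty_quantileSet hu₂mem.2) hr₂l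
    have h2 : u < u₂ := by
      rw [hu₂_def]
      have : 0 < min δ (1 - u) := lt_min hδ (by linarith [hu.2])
      linarith
    exact lt_of_lt_of_le h2 (le_trans hy (hG.mono hyr.le))
  have ev1 : ∀ᶠ n in atTop, Gn n r₁ < u := (hconv r₁).eventually_lt_const hGr₁
  have ev2 : ∀ᶠ n in atTop, u < Gn n r₂ := (hconv r₂).eventually_const_lt hGr₂
  obtain ⟨N, hN⟩ := eventually_atTop.1 (ev1.and ev2)
  refine ⟨N, fun n hn => ?_⟩
  obtain ⟨h1, h2⟩ := hN n hn
  have hlow : (r₁ : ℝ) ≤ quantile (Gn n) u := (hGn n).le_quantile_of_cdf_lt hu.2 h1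
  have hhigh : quantile (Gn n) u ≤ (r₂ : ℝ) :=
    csInf_le ((hGn n).bddBelow_quantileSet hu.1) h2.le
  rw [Real.dist_eq, abs_lt]
  constructor <;> linarith

/-- The set of `u ∈ (0,1)` where the quantile function is discontinuous is countable. -/
lemma countable_discont {G : ℝ → ℝ} (hG : IsCDF G) :
    Set.Countable {u | u ∈ Ioo (0:ℝ) 1 ∧ ¬ContinuousAt (quantile G) u} := by
  set a : ℕ → ℝ := fun k => 1 / (k + 3) with ha_def
  set b : ℕ → ℝ := fun k => 1 - 1 / (k + 3) with hb_def
  have hak : ∀ k, 0 < a k := fun k => by positivity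
  have hab : ∀ k, a k ≤ b k := by
    intro k
    have h3 : (3:ℝ) ≤ (k:ℝ) + 3 := by
      have := Nat.cast_nonneg (α := ℝ) k
      linarith
    have h1 : (1:ℝ) / (k + 3) ≤ 1 / 3 := one_div_le_one_div_of_le (by norm_num) h3
    simp only [ha_def, hb_def]
    linarith
  have hbk : ∀ k, b k < 1 := by
    intro k
    have : 0 < (1:ℝ) / (k + 3) := by positivity
    simp only [hb_def]
    linarith
  set Q : ℕ → ℝ → ℝ := fun k v => quantile G (max (a k) (min v (b k))) with hQ_def
  have hQmono : ∀ k, Monotone (Q k) := by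
    intro k v w hvw
    have hmem : ∀ x : ℝ, max (a k) (min x (b k)) ∈ Ioo (0:ℝ) 1 := by
      intro x
      constructor
      · exact lt_of_lt_of_le (hak k) (le_max_left _ _)
      · exact lt_of_le_of_lt (max_le (hab k) (min_le_right _ _)) (hbk k)
    exact hG.monotoneOn_quantile (hmem v) (hmem w)
      (max_le_max le_rfl (min_le_min hvw le_rfl))
  refine Set.Countable.mono ?_ (Set.countable_iUnion
    (fun k => (hQmono k).countable_not_continuousAt))
  intro u hu
  obtain ⟨huIoo, hunc⟩ := hu
  obtain ⟨n, hn⟩ := exists_nat_one_div_lt (lt_min huIoo.1 (by linarith [huIoo.2]) :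
    (0:ℝ) < min u (1 - u))
  have hn3 : (1:ℝ) / (n + 3) < min u (1 - u) := by
    refine lt_of_le_of_lt ?_ hn
    have h13 : ((n:ℝ) + 1) ≤ (n:ℝ) + 3 := by linarith
    exact one_div_le_one_div_of_le (by positivity) h13
  have hua : a n < u := lt_of_le_of_lt (le_of_eq rfl) (lt_of_lt_of_le hn3 (min_le_left _ _))
  have hub : u < b n := by
    have := lt_of_lt_of_le hn3 (min_le_right _ _)
    simp only [hb_def]
    linarith
  refine mem_iUnion.2 ⟨n, ?_⟩
  simp only [mem_setOf_eq]
  intro hcontQ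
  apply hunc
  have heq : Q n =ᶠ[nhds u] quantile G := by
    filter_upwards [Ioo_mem_nhds hua hub] with v hv
    have h1 : min v (b n) = v := min_eq_left hv.2.le
    have h2 : max (a n) v = v := max_eq_right hv.1.le
    simp only [hQ_def, h1, h2]
  exact (continuousAt_congr heq).1 hcontQ

/-! ### Scheffé's lemma (via dominated convergence) -/

lemma scheffe {α : Type*} [MeasurableSpace α] {μ : Measure α} {f : ℕ → α → ℝ} {g : α → ℝ}
    (hf : ∀ n, Integrable (f n) μ) (hg : Integrable g μ)
    (hae : ∀ᵐ a ∂μ, Tendsto (fun n => f n a) atTop (𝓝 (g a)))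
    (hnorm : Tendsto (fun n => ∫ a, |f n a| ∂μ) atTop (𝓝 (∫ a, |g a| ∂μ))) :
    Tendsto (fun n => ∫ a, |f n a - g a| ∂μ) atTop (𝓝 0) := by
  set v : ℕ → α → ℝ := fun n a => |f n a - g a| - |f n a| + |g a| with hv_def
  have hv_nonneg : ∀ n a, 0 ≤ v n a := by
    intro n a
    have := abs_sub_abs_le_abs_sub (f n a) (g a)
    simp only [hv_def]
    linarith
  have hv_le : ∀ n a, v n a ≤ 2 * |g a| := by
    intro n a
    have h := abs_sub (f n a) (g a)
    simp only [hv_def]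
    linarith
  have hv_int : ∀ n, Integrable (v n) μ :=
    fun n => (((hf n).sub hg).abs.sub (hf n).abs).add hg.abs
  have hDCT : Tendsto (fun n => ∫ a, v n a ∂μ) atTop (𝓝 (∫ a, (0:ℝ) ∂μ)) := by
    refine tendsto_integral_of_dominated_convergence (fun a => 2 * |g a|)
      (fun n => (hv_int n).aestronglyMeasurable) (hg.abs.const_mul 2) (fun n => ?_) ?_
    · refine ae_of_all _ fun a => ?_
      rw [Real.norm_eq_abs, abs_of_nonneg (hv_nonneg n a)]
      exact hv_le n a
    · filter_upwards [hae] with a ha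
      have h1 : Tendsto (fun n => |f n a - g a|) atTop (𝓝 0) := by
        have := (ha.sub_const (g a)).abs
        simpa using this
      have h2 : Tendsto (fun n => |f n a|) atTop (𝓝 |g a|) := ha.abs
      have := (h1.sub h2).add_const |g a|
      simpa [hv_def] using this
  rw [integral_zero] at hDCT
  have key : Tendsto (fun n => (∫ a, v n a ∂μ) + (∫ a, |f n a| ∂μ) - ∫ a, |g a| ∂μ)
      atTop (𝓝 0) := by
    have := (hDCT.add hnorm).sub_const (∫ a, |g a| ∂μ)
    simpa using this
  refine key.congr (fun n => ?_)
  have h1 : ∫ a, v n a ∂μ = (∫ a, |f n a - g a| ∂μ) - (∫ a, |f n a| ∂μ) + ∫ a, |g a| ∂μ := by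
    simp only [hv_def]
    have hA : Integrable (fun a => |f n a - g a| - |f n a|) μ :=
      (((hf n).sub hg).abs.sub (hf n).abs : )
    have hB : Integrable (fun a => |f n a - g a|) μ := (((hf n).sub hg).abs : )
    have hC : Integrable (fun a => |f n a|) μ := (hf n).abs
    rw [integral_add hA hg.abs, integral_sub hB hC]
  rw [h1]
  ring


/-! ### Strong-law consequences -/

lemma ae_tendsto_empCDF {Ω : Type*} [MeasureSpace Ω] [IsProbabilityMeasure (ℙ : Measure Ω)]
    (X : ℕ → Ω → ℝ) (hmeas : ∀ i, Measurable (X i))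
    (hindep : ProbabilityTheory.iIndepFun X ℙ)
    (hident : ∀ i : ℕ, Measure.map (X i) ℙ = Measure.map (X 0) ℙ)
    (r : ℝ) :
    ∀ᵐ ω ∂(ℙ : Measure Ω), Tendsto (fun n => empCDF X n ω r) atTop
      (𝓝 ((ℙ {ω | X 0 ω ≤ r}).toReal)) := by
  set g : ℝ → ℝ := fun x => if x ≤ r then (1:ℝ) else 0 with hg_def
  have hg : Measurable g := Measurable.ite measurableSet_Iic measurable_const measurable_const
  set Y : ℕ → Ω → ℝ := fun i => g ∘ X i with hY_def
  have hYint : Integrable (Y 0) ℙ := by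
    refine Integrable.mono' (integrable_const (1:ℝ))
      (hg.comp (hmeas 0)).aestronglyMeasurable (ae_of_all _ fun ω => ?_)
    simp only [hY_def, hg_def, Function.comp_apply, Real.norm_eq_abs]
    split <;> norm_num
  have hpair : Pairwise (Function.onFun (fun a b => ProbabilityTheory.IndepFun a b ℙ) Y) :=
    fun i j hij => (hindep.indepFun hij).comp hg hg
  have hidY : ∀ i, ProbabilityTheory.IdentDistrib (Y i) (Y 0) ℙ ℙ :=
    fun i => ProbabilityTheory.IdentDistrib.comp
      ⟨(hmeas i).aemeasurable, (hmeas 0).aemeasurable, hident i⟩ hg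
  have hSLLN := ProbabilityTheory.strong_law_ae_real Y hYint hpair hidY
  have hmean : (∫ ω, Y 0 ω ∂(ℙ : Measure Ω)) = (ℙ {ω | X 0 ω ≤ r}).toReal := by
    have h1 : (fun ω => Y 0 ω) = fun ω => ({ω | X 0 ω ≤ r}).indicator (fun _ => (1:ℝ)) ω := by
      funext ω
      simp only [hY_def, hg_def, Function.comp_apply, indicator_apply, mem_setOf_eq]
    rw [h1, integral_indicator_const (1:ℝ)
      (show MeasurableSet {ω | X 0 ω ≤ r} from hmeas 0 measurableSet_Iic), smul_eq_mul, mul_one, measureReal_def]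
  rw [hmean] at hSLLN
  filter_upwards [hSLLN] with ω hω
  refine Tendsto.congr (fun n => ?_) hω
  exact div_eq_inv_mul _ _

lemma ae_tendsto_avg_abs {Ω : Type*} [MeasureSpace Ω] [IsProbabilityMeasure (ℙ : Measure Ω)]
    (X : ℕ → Ω → ℝ) (hmeas : ∀ i, Measurable (X i))
    (hindep : ProbabilityTheory.iIndepFun X ℙ)
    (hident : ∀ i : ℕ, Measure.map (X i) ℙ = Measure.map (X 0) ℙ)
    (hint : Integrable (X 0) ℙ) :
    ∀ᵐ ω ∂(ℙ : Measure Ω), Tendsto (fun n : ℕ => (n:ℝ)⁻¹ * ∑ i ∈ Finset.range n, |X i ω|) atTop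
      (𝓝 (∫ ω, |X 0 ω| ∂(ℙ : Measure Ω))) := by
  set Y : ℕ → Ω → ℝ := fun i => (fun x => |x|) ∘ X i with hY_def
  have hYint : Integrable (Y 0) ℙ := hint.abs
  have hpair : Pairwise (Function.onFun (fun a b => ProbabilityTheory.IndepFun a b ℙ) Y) :=
    fun i j hij => (hindep.indepFun hij).comp measurable_abs measurable_abs
  have hidY : ∀ i, ProbabilityTheory.IdentDistrib (Y i) (Y 0) ℙ ℙ :=
    fun i => ProbabilityTheory.IdentDistrib.comp
      ⟨(hmeas i).aemeasurable, (hmeas 0).aemeasurable, hident i⟩ measurable_abs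
  have hSLLN := ProbabilityTheory.strong_law_ae_real Y hYint hpair hidY
  filter_upwards [hSLLN] with ω hω
  refine Tendsto.congr (fun n => ?_) hω
  exact div_eq_inv_mul _ _

end Lemmas








/-- For fixed `m`: the identity
`W_p^p(𝔽_{n,m}, F_m) = (1/m) ∑_j |μ̂_{j:m} − μ_{j:m}(F)|^p` and the almost-sure
convergence `W_p(𝔽_{n,m}, F_m) → 0` as `n → ∞`. -/
theorem wasserstein_empHoeffCDF_fixed_m
    {Ω : Type*} [MeasureSpace Ω] [IsProbabilityMeasure (ℙ : Measure Ω)]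
    (X : ℕ → Ω → ℝ) (hmeas : ∀ i, Measurable (X i))
    (hindep : ProbabilityTheory.iIndepFun X ℙ)
    (hident : ∀ i : ℕ, Measure.map (X i) ℙ = Measure.map (X 0) ℙ)
    (hint : Integrable (X 0) ℙ)
    (F : ℝ → ℝ) (hF : ∀ t : ℝ, F t = (ℙ {ω | X 0 ω ≤ t}).toReal)
    (m : ℕ) (hm : 0 < m) (p : ℝ) (hp : 1 ≤ p) :
    (∀ ω : Ω, ∀ n : ℕ, 0 < n →
      (∫ t in Ioo (0:ℝ) 1,
          |quantile (hoeffCDF m (empCDF X n ω)) t - quantile (hoeffCDF m F) t| ^ p)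
        = (m : ℝ)⁻¹ * ∑ j ∈ Finset.Icc 1 m, |muOS m j (empCDF X n ω) - muOS m j F| ^ p) ∧
    (∀ᵐ ω ∂(ℙ : Measure Ω),
      Tendsto (fun n : ℕ =>
          (∫ t in Ioo (0:ℝ) 1,
            |quantile (hoeffCDF m (empCDF X n ω)) t - quantile (hoeffCDF m F) t| ^ p) ^ (1/p))
        atTop (nhds 0)) := by
  have hm' : (0:ℝ) < m := Nat.cast_pos.2 hm
  set μ₀ : Measure ℝ := Measure.map (X 0) ℙ with hμ₀
  have hprob0 : IsProbabilityMeasure μ₀ := Measure.isProbabilityMeasure_map (hmeas 0).aemeasurable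
  have hFcdf : ∀ t, (μ₀ (Iic t)).toReal = F t := by
    intro t
    rw [hF t, hμ₀, Measure.map_apply (hmeas 0) measurableSet_Iic]
    rfl
  have hFisCDF : IsCDF F := by
    have h : F = fun t => (μ₀ (Iic t)).toReal := funext fun t => (hFcdf t).symm
    rw [h]
    exact isCDF_toReal_Iic μ₀
  have hFfin : IntegrableOn (fun u => quantile F u) (Ioo (0:ℝ) 1) volume := by
    refine (hFisCDF.integrableOn_quantile_iff μ₀ hFcdf).2 ?_
    exact (integrable_map_measure aestronglyMeasurable_id (hmeas 0).aemeasurable).2 hint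
  have hEcdf : ∀ (ω : Ω) (n : ℕ), ∀ t, ((empMeasure n fun i => X i ω) (Iic t)).toReal
      = empCDF X n ω t := fun ω n t => (empCDF_eq_toReal X n ω t).symm
  have hEmpInt : ∀ (ω : Ω) (n : ℕ), 0 < n →
      IntegrableOn (fun u => quantile (empCDF X n ω) u) (Ioo (0:ℝ) 1) volume := by
    intro ω n hn
    have := isProbabilityMeasure_empMeasure hn (fun i => X i ω)
    exact ((isCDF_empCDF X hn ω).integrableOn_quantile_iff _ (hEcdf ω n)).2
      (integrable_empMeasure stronglyMeasurable_id)
  have part1 : ∀ ω : Ω, ∀ n : ℕ, 0 < n →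
      (∫ t in Ioo (0:ℝ) 1,
          |quantile (hoeffCDF m (empCDF X n ω)) t - quantile (hoeffCDF m F) t| ^ p)
        = (m : ℝ)⁻¹ * ∑ j ∈ Finset.Icc 1 m, |muOS m j (empCDF X n ω) - muOS m j F| ^ p := by
    intro ω n hn
    exact wasserstein_identity hm (empCDF X n ω) F p
      (muOS_mono (isCDF_empCDF X hn ω).monotoneOn_quantile (hEmpInt ω n hn))
      (muOS_mono hFisCDF.monotoneOn_quantile hFfin)
  refine ⟨part1, ?_⟩
  have hEabsF : (∫ u in Ioo (0:ℝ) 1, |quantile F u|) = ∫ ω, |X 0 ω| ∂(ℙ : Measure Ω) := by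
    rw [hFisCDF.integral_comp_quantile μ₀ hFcdf continuous_abs, hμ₀,
      integral_map (hmeas 0).aemeasurable continuous_abs.aestronglyMeasurable]
  have hr_all : ∀ᵐ ω ∂(ℙ : Measure Ω), ∀ r : ℚ,
      Tendsto (fun n => empCDF X n ω (r:ℝ)) atTop (nhds (F r)) := by
    rw [ae_all_iff]
    intro r
    filter_upwards [ae_tendsto_empCDF X hmeas hindep hident (r:ℝ)] with ω hω
    rw [hF (r:ℝ)]
    exact hω
  filter_upwards [hr_all, ae_tendsto_avg_abs X hmeas hindep hident hint] with ω hωr hωa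
  have hGn : ∀ n : ℕ, IsCDF (empCDF X (n+1) ω) := fun n => isCDF_empCDF X n.succ_pos ω
  have hconv : ∀ r : ℚ, Tendsto (fun n => empCDF X (n+1) ω (r:ℝ)) atTop (nhds (F r)) :=
    fun r => (hωr r).comp (tendsto_add_atTop_nat 1)
  have haeq : ∀ᵐ u ∂(volume.restrict (Ioo (0:ℝ) 1)),
      Tendsto (fun n => quantile (empCDF X (n+1) ω) u) atTop (nhds (quantile F u)) := by
    have hz : volume {u | u ∈ Ioo (0:ℝ) 1 ∧ ¬ContinuousAt (quantile F) u} = 0 :=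
      (countable_discont hFisCDF).measure_zero _
    rw [ae_restrict_iff' measurableSet_Ioo]
    filter_upwards [measure_eq_zero_iff_ae_notMem.1 hz] with u hu huIoo
    have hcont : ContinuousAt (quantile F) u := by
      by_contra hc
      exact hu ⟨huIoo, hc⟩
    exact tendsto_quantile hFisCDF hGn hconv huIoo hcont
  have hnormconv : Tendsto (fun n : ℕ => ∫ u in Ioo (0:ℝ) 1, |quantile (empCDF X (n+1) ω) u|)
      atTop (nhds (∫ u in Ioo (0:ℝ) 1, |quantile F u|)) := by
    have heq : ∀ n : ℕ, (∫ u in Ioo (0:ℝ) 1, |quantile (empCDF X (n+1) ω) u|)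
        = (((n+1 : ℕ)):ℝ)⁻¹ * ∑ i ∈ Finset.range (n+1), |X i ω| := by
      intro n
      have := isProbabilityMeasure_empMeasure n.succ_pos (fun i => X i ω)
      rw [(isCDF_empCDF X n.succ_pos ω).integral_comp_quantile _ (hEcdf ω (n+1)) continuous_abs,
        integral_empMeasure continuous_abs.stronglyMeasurable]
    rw [hEabsF]
    exact Tendsto.congr (fun n => (heq n).symm) (hωa.comp (tendsto_add_atTop_nat 1))
  have hW1 : Tendsto (fun n : ℕ => ∫ u in Ioo (0:ℝ) 1,
      |quantile (empCDF X (n+1) ω) u - quantile F u|) atTop (nhds 0) :=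
    scheffe (fun n => hEmpInt ω (n+1) n.succ_pos) hFfin haeq hnormconv
  have hmu : ∀ j ∈ Finset.Icc 1 m, Tendsto
      (fun n : ℕ => |muOS m j (empCDF X (n+1) ω) - muOS m j F|) atTop (nhds 0) := by
    intro j _
    set C : ℝ := (m : ℝ) * ((m-1).choose (j-1) : ℝ) with hC
    have hC0 : (0:ℝ) ≤ C := by positivity
    have hbound : ∀ n : ℕ, |muOS m j (empCDF X (n+1) ω) - muOS m j F|
        ≤ C * ∫ u in Ioo (0:ℝ) 1, |quantile (empCDF X (n+1) ω) u - quantile F u| := by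
      intro n
      have hint_n := hEmpInt ω (n+1) n.succ_pos
      have hsub : IntegrableOn
          (fun u => quantile (empCDF X (n+1) ω) u - quantile F u) (Ioo (0:ℝ) 1) volume :=
        hint_n.sub hFfin
      have h1 : muOS m j (empCDF X (n+1) ω) - muOS m j F
          = ∫ u in Ioo (0:ℝ) 1,
              (quantile (empCDF X (n+1) ω) u - quantile F u) * betaDens m j u := by
        rw [muOS, muOS, ← integral_sub (integrableOn_mul_betaDens hint_n m j)
          (integrableOn_mul_betaDens hFfin m j)]
        exact (setIntegral_congr_fun measurableSet_Ioo (fun u _ => by ring)).symm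
      rw [h1]
      have h2 := norm_integral_le_integral_norm (μ := volume.restrict (Ioo (0:ℝ) 1))
        (fun u => (quantile (empCDF X (n+1) ω) u - quantile F u) * betaDens m j u)
      simp only [Real.norm_eq_abs] at h2
      refine le_trans h2 ?_
      rw [← integral_const_mul]
      refine integral_mono_ae ((integrableOn_mul_betaDens hsub m j).abs)
        ((hsub.abs).const_mul C) ?_
      rw [Filter.EventuallyLE, ae_restrict_iff' measurableSet_Ioo]
      refine ae_of_all _ fun u hu => ?_
      rw [abs_mul]
      calc |quantile (empCDF X (n+1) ω) u - quantile F u| * |betaDens m j u|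
          ≤ |quantile (empCDF X (n+1) ω) u - quantile F u| * C :=
            mul_le_mul_of_nonneg_left (betaDens_le hu) (abs_nonneg _)
        _ = C * |quantile (empCDF X (n+1) ω) u - quantile F u| := mul_comm _ _
    have hCW : Tendsto (fun n : ℕ => C * ∫ u in Ioo (0:ℝ) 1,
        |quantile (empCDF X (n+1) ω) u - quantile F u|) atTop (nhds 0) := by
      have := hW1.const_mul C
      simpa using this
    exact squeeze_zero (fun n => abs_nonneg _) hbound hCW
  have hsum : Tendsto (fun n : ℕ => (m:ℝ)⁻¹ * ∑ j ∈ Finset.Icc 1 m,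
      |muOS m j (empCDF X (n+1) ω) - muOS m j F| ^ p) atTop (nhds 0) := by
    have hterm : ∀ j ∈ Finset.Icc 1 m, Tendsto
        (fun n : ℕ => |muOS m j (empCDF X (n+1) ω) - muOS m j F| ^ p) atTop (nhds 0) := by
      intro j hj
      have h := (hmu j hj).rpow_const (Or.inr (by linarith : (0:ℝ) ≤ p))
      rwa [Real.zero_rpow (by linarith : p ≠ 0)] at h
    have hS := tendsto_finset_sum (Finset.Icc 1 m) hterm
    have := hS.const_mul (m:ℝ)⁻¹
    simpa using this
  have hfinal : Tendsto (fun n : ℕ => (∫ t in Ioo (0:ℝ) 1,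
      |quantile (hoeffCDF m (empCDF X (n+1) ω)) t - quantile (hoeffCDF m F) t| ^ p) ^ (1/p))
      atTop (nhds 0) := by
    have h2 := hsum.congr (fun n => (part1 ω (n+1) n.succ_pos).symm)
    have h3 := h2.rpow_const (Or.inr (by positivity : (0:ℝ) ≤ 1/p))
    rwa [Real.zero_rpow (by positivity : 1/p ≠ 0)] at h3
  exact (tendsto_add_atTop_iff_nat 1).1 hfinal
end
end

section
/- Let m be a positive integer and G a CDF on ℝ with finite mean. Then the quantile function of the Hoeffding transform H_m(G) is I_m(G^{-1}): for every j ∈ {1, …, m} and every u ∈ ((j−1)/m, j/m], (H_m(G))^{-1}(u) = μ_{j:m}(G) = ∫₀¹ G^{-1}(t) f_{B_{j:m}}(t) dt. In particular, the sequence j ↦ μ_{j:m}(G) is nondecreasing. -/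
open MeasureTheory Filter Set
open scoped BoundedContinuousFunction ProbabilityTheory

noncomputable section

namespace QHAux

lemma quantile_mono (G : ℝ → ℝ) (hG : IsCDF G) {p q : ℝ} (hp : 0 < p) (hq : q < 1)
    (hpq : p ≤ q) : quantile G p ≤ quantile G q := by
  obtain ⟨x1, hx1⟩ := (hG.tendsto_atTop.eventually (eventually_ge_nhds hq)).exists
  obtain ⟨x0, hx0⟩ := (hG.tendsto_atBot.eventually (eventually_lt_nhds hp)).exists
  refine csInf_le_csInf ⟨x0, fun y hy => ?_⟩ ⟨x1, hx1⟩ (fun x hx => le_trans hpq hx)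
  by_contra hlt
  push_neg at hlt
  exact absurd hy (not_le.2 (lt_of_le_of_lt (hG.mono hlt.le) hx0))

lemma betaDens_cont (m j : ℕ) : Continuous (betaDens m j) := by
  unfold betaDens; fun_prop

lemma betaDens_nonneg (m j : ℕ) {u : ℝ} (hu : u ∈ Ioo (0:ℝ) 1) : 0 ≤ betaDens m j u := by
  unfold betaDens
  have h1 : (0:ℝ) ≤ u := hu.1.le
  have h2 : (0:ℝ) ≤ 1 - u := by linarith [hu.2]
  positivity

lemma betaDens_bound (m j : ℕ) {u : ℝ} (hu : u ∈ Ioo (0:ℝ) 1) :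
    betaDens m j u ≤ (m : ℝ) * ((m-1).choose (j-1) : ℝ) := by
  unfold betaDens
  have h1 : (0:ℝ) ≤ u := hu.1.le
  have h2 : (0:ℝ) ≤ 1 - u := by linarith [hu.2]
  have h3 : u ^ (j-1) ≤ 1 := pow_le_one₀ h1 hu.2.le
  have h4 : (1-u) ^ (m-j) ≤ 1 := pow_le_one₀ h2 (by linarith [hu.1])
  have h5 : (0:ℝ) ≤ (m : ℝ) * ((m-1).choose (j-1) : ℝ) := by positivity
  calc (m : ℝ) * ((m-1).choose (j-1) : ℝ) * u ^ (j-1) * (1-u) ^ (m-j)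
      ≤ (m : ℝ) * ((m-1).choose (j-1) : ℝ) * 1 * 1 := by
        apply mul_le_mul _ h4 (by positivity) (by positivity)
        apply mul_le_mul le_rfl h3 (by positivity) h5
    _ = (m : ℝ) * ((m-1).choose (j-1) : ℝ) := by ring

lemma integrable_q_beta {G : ℝ → ℝ} (hGmean : HasFiniteMean G) (m j : ℕ) :
    IntegrableOn (fun u => quantile G u * betaDens m j u) (Ioo (0:ℝ) 1) := by
  refine Integrable.mono' (hGmean.norm.const_mul ((m : ℝ) * ((m-1).choose (j-1) : ℝ))) ?_ ?_
  · exact hGmean.aestronglyMeasurable.mul ((betaDens_cont m j).aestronglyMeasurable.restrict)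
  · filter_upwards [ae_restrict_mem measurableSet_Ioo] with u hu
    rw [norm_mul]
    rw [Real.norm_eq_abs (betaDens m j u), abs_of_nonneg (betaDens_nonneg m j hu)]
    rw [mul_comm ((m : ℝ) * _)]
    exact mul_le_mul_of_nonneg_left (betaDens_bound m j hu) (norm_nonneg _)

lemma integrable_beta (m j : ℕ) : IntegrableOn (betaDens m j) (Ioo (0:ℝ) 1) :=
  ((betaDens_cont m j).integrableOn_Ioc).mono_set Ioo_subset_Ioc_self

lemma nat_id1 (a c : ℕ) :
    (a+c+2) * Nat.choose (a+c+1) a = Nat.choose (a+c+2) (a+1) * (a+1) := by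
  simpa [Nat.succ_eq_add_one] using Nat.add_one_mul_choose_eq (a+c+1) a

lemma nat_id2 (a c : ℕ) :
    (a+c+2) * Nat.choose (a+c+1) (a+1) = Nat.choose (a+c+2) (a+1) * (c+1) := by
  have h1 : Nat.choose (a+c+1) (a+1) = Nat.choose (a+c+1) c := by
    rw [← Nat.choose_symm (by omega : a+1 ≤ a+c+1)]
    congr 1; omega
  have h2 : Nat.choose (a+c+2) (a+1) = Nat.choose (a+c+2) (c+1) := by
    rw [← Nat.choose_symm (by omega : a+1 ≤ a+c+2)]
    congr 1; omega
  rw [h1, h2]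
  have := Nat.add_one_mul_choose_eq (a+c+1) c
  have he : a+c+1 = c+a+1 := by omega
  rw [he]
  simpa [Nat.succ_eq_add_one, Nat.add_comm, Nat.add_assoc, Nat.add_left_comm] using this

lemma betaDens_diff (a c : ℕ) (u : ℝ) :
    betaDens (a+c+2) (a+2) u - betaDens (a+c+2) (a+1) u
      = ((a+c+2).choose (a+1) : ℝ) * (u^a * (1-u)^c) * ((((a:ℝ)+c+2))*u - ((a:ℝ)+1)) := by
  have h1 : ((a:ℝ)+c+2) * ((a+c+1).choose a : ℝ) = ((a+c+2).choose (a+1) : ℝ) * ((a:ℝ)+1) := by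
    exact_mod_cast congrArg (Nat.cast : ℕ → ℝ) (nat_id1 a c)
  have h2 : ((a:ℝ)+c+2) * ((a+c+1).choose (a+1) : ℝ) = ((a+c+2).choose (a+1) : ℝ) * ((c:ℝ)+1) := by
    exact_mod_cast congrArg (Nat.cast : ℕ → ℝ) (nat_id2 a c)
  unfold betaDens
  have e1 : a+c+2-1 = a+c+1 := by omega
  have e2 : a+2-1 = a+1 := by omega
  have e3 : a+c+2-(a+2) = c := by omega
  have e4 : a+1-1 = a := by omega
  have e5 : a+c+2-(a+1) = c+1 := by omega
  rw [e1, e2, e3, e4, e5]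
  push_cast
  linear_combination (u^a * u * (1-u)^c) * h2 - (u^a * (1-u)^c * (1-u)) * h1

lemma hasDeriv_g (a c : ℕ) (u : ℝ) :
    HasDerivAt (fun v : ℝ => ((a+c+2).choose (a+1) : ℝ) * (v ^ (a+1) * (1-v) ^ (c+1)))
      (betaDens (a+c+2) (a+1) u - betaDens (a+c+2) (a+2) u) u := by
  have h1 : HasDerivAt (fun v : ℝ => v ^ (a+1)) (((a:ℝ)+1) * u ^ a) u := by
    simpa using hasDerivAt_pow (a+1) u
  have h2 : HasDerivAt (fun v : ℝ => (1-v) ^ (c+1)) (-(((c:ℝ)+1) * (1-u) ^ c)) u := by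
    have := (hasDerivAt_pow (c+1) (1-u)).comp u
      ((hasDerivAt_const u (1:ℝ)).sub (hasDerivAt_id u))
    simpa [Function.comp_def] using this
  have h3 := (h1.mul h2).const_mul (((a+c+2).choose (a+1) : ℝ))
  refine HasDerivAt.congr_deriv h3 ?_
  symm
  have hd := betaDens_diff a c u
  have : betaDens (a+c+2) (a+1) u - betaDens (a+c+2) (a+2) u
      = -(betaDens (a+c+2) (a+2) u - betaDens (a+c+2) (a+1) u) := by ring
  rw [this, hd]
  ring

lemma integral_diff_zero (a c : ℕ) :
    ∫ u in Ioo (0:ℝ) 1, (betaDens (a+c+2) (a+2) u - betaDens (a+c+2) (a+1) u) = 0 := by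
  have hcont : Continuous fun u : ℝ => betaDens (a+c+2) (a+1) u - betaDens (a+c+2) (a+2) u :=
    (betaDens_cont _ _).sub (betaDens_cont _ _)
  have hftc := intervalIntegral.integral_eq_sub_of_hasDerivAt
    (f := fun v : ℝ => ((a+c+2).choose (a+1) : ℝ) * (v ^ (a+1) * (1-v) ^ (c+1)))
    (f' := fun u => betaDens (a+c+2) (a+1) u - betaDens (a+c+2) (a+2) u)
    (a := 0) (b := 1)
    (fun x _ => hasDeriv_g a c x) (hcont.intervalIntegrable 0 1)
  simp only [one_pow, sub_self, zero_pow (Nat.succ_ne_zero c), mul_zero, sub_zero,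
    zero_pow (Nat.succ_ne_zero a), zero_mul, sub_zero] at hftc
  rw [intervalIntegral.integral_of_le (by norm_num : (0:ℝ) ≤ 1),
    integral_Ioc_eq_integral_Ioo] at hftc
  have hneg : ∫ u in Ioo (0:ℝ) 1, (betaDens (a+c+2) (a+2) u - betaDens (a+c+2) (a+1) u)
      = - ∫ u in Ioo (0:ℝ) 1, (betaDens (a+c+2) (a+1) u - betaDens (a+c+2) (a+2) u) := by
    rw [← integral_neg]
    congr 1; funext u; ring
  rw [hneg, hftc]
  ring



lemma muOS_step (m : ℕ) (G : ℝ → ℝ) (hG : IsCDF G) (hGmean : HasFiniteMean G)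
    {j : ℕ} (hj : 1 ≤ j) (hjm : j + 1 ≤ m) : muOS m j G ≤ muOS m (j+1) G := by
  obtain ⟨a, rfl⟩ : ∃ a, j = a + 1 := ⟨j - 1, by omega⟩
  obtain ⟨c, rfl⟩ : ∃ c, m = a + c + 2 := ⟨m - a - 2, by omega⟩
  have hmR : (0:ℝ) < (a:ℝ) + c + 2 := by positivity
  have hq0 : (0:ℝ) < ((a:ℝ)+1) / ((a:ℝ)+c+2) := by positivity
  have hq1 : ((a:ℝ)+1) / ((a:ℝ)+c+2) < 1 := by
    rw [div_lt_one hmR]; linarith [Nat.cast_nonneg (α := ℝ) c]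
  set cst := quantile G (((a:ℝ)+1) / ((a:ℝ)+c+2)) with hcst
  have hpt : ∀ u ∈ Ioo (0:ℝ) 1,
      0 ≤ (quantile G u - cst) * (betaDens (a+c+2) (a+2) u - betaDens (a+c+2) (a+1) u) := by
    intro u hu
    rw [betaDens_diff]
    have hKnn : (0:ℝ) ≤ ((a+c+2).choose (a+1) : ℝ) * (u^a * (1-u)^c) := by
      have h1 : (0:ℝ) ≤ u := hu.1.le
      have h2 : (0:ℝ) ≤ 1 - u := by linarith [hu.2]
      positivity
    rcases le_total u (((a:ℝ)+1)/((a:ℝ)+c+2)) with h | h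
    · have hqle : quantile G u ≤ cst := quantile_mono G hG hu.1 hq1 h
      have hle0 : (((a:ℝ)+c+2))*u - ((a:ℝ)+1) ≤ 0 := by
        rw [sub_nonpos]
        calc ((a:ℝ)+c+2)*u ≤ ((a:ℝ)+c+2) * (((a:ℝ)+1)/((a:ℝ)+c+2)) :=
              mul_le_mul_of_nonneg_left h hmR.le
          _ = (a:ℝ)+1 := by field_simp
      have hb : ((a+c+2).choose (a+1) : ℝ) * (u^a * (1-u)^c) * ((((a:ℝ)+c+2))*u - ((a:ℝ)+1)) ≤ 0 :=
        mul_nonpos_of_nonneg_of_nonpos hKnn hle0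
      nlinarith [hb, hqle]
    · have hqge : cst ≤ quantile G u := quantile_mono G hG hq0 hu.2 h
      have hge0 : 0 ≤ (((a:ℝ)+c+2))*u - ((a:ℝ)+1) := by
        rw [sub_nonneg]
        calc (a:ℝ)+1 = ((a:ℝ)+c+2) * (((a:ℝ)+1)/((a:ℝ)+c+2)) := by field_simp
          _ ≤ ((a:ℝ)+c+2)*u := mul_le_mul_of_nonneg_left h hmR.le
      exact mul_nonneg (by linarith) (mul_nonneg hKnn hge0)
  have hI1 := integrable_q_beta hGmean (a+c+2) (a+1)
  have hI2 := integrable_q_beta hGmean (a+c+2) (a+2)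
  have hI3 := integrable_beta (a+c+2) (a+1)
  have hI4 := integrable_beta (a+c+2) (a+2)
  have hnn : 0 ≤ ∫ u in Ioo (0:ℝ) 1,
      (quantile G u - cst) * (betaDens (a+c+2) (a+2) u - betaDens (a+c+2) (a+1) u) :=
    setIntegral_nonneg measurableSet_Ioo hpt
  have hA : ∫ u in Ioo (0:ℝ) 1, (quantile G u * betaDens (a+c+2) (a+2) u
        - quantile G u * betaDens (a+c+2) (a+1) u)
      = (∫ u in Ioo (0:ℝ) 1, quantile G u * betaDens (a+c+2) (a+2) u)
        - ∫ u in Ioo (0:ℝ) 1, quantile G u * betaDens (a+c+2) (a+1) u := integral_sub hI2 hI1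
  have hB : ∫ u in Ioo (0:ℝ) 1, (cst * (betaDens (a+c+2) (a+2) u - betaDens (a+c+2) (a+1) u))
      = cst * ∫ u in Ioo (0:ℝ) 1, (betaDens (a+c+2) (a+2) u - betaDens (a+c+2) (a+1) u) :=
    integral_const_mul _ _
  have hC : ∫ u in Ioo (0:ℝ) 1, ((quantile G u * betaDens (a+c+2) (a+2) u
        - quantile G u * betaDens (a+c+2) (a+1) u)
        - cst * (betaDens (a+c+2) (a+2) u - betaDens (a+c+2) (a+1) u))
      = ((∫ u in Ioo (0:ℝ) 1, quantile G u * betaDens (a+c+2) (a+2) u)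
        - ∫ u in Ioo (0:ℝ) 1, quantile G u * betaDens (a+c+2) (a+1) u)
        - cst * ∫ u in Ioo (0:ℝ) 1, (betaDens (a+c+2) (a+2) u - betaDens (a+c+2) (a+1) u) := by
    have h12 : IntegrableOn (fun u => quantile G u * betaDens (a+c+2) (a+2) u
        - quantile G u * betaDens (a+c+2) (a+1) u) (Ioo (0:ℝ) 1) := hI2.sub hI1
    have h34 : IntegrableOn (fun u => cst * (betaDens (a+c+2) (a+2) u
        - betaDens (a+c+2) (a+1) u)) (Ioo (0:ℝ) 1) := (hI4.sub hI3).const_mul cst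
    rw [integral_sub h12 h34, hA, hB]
  have hE : ∫ u in Ioo (0:ℝ) 1,
        (quantile G u - cst) * (betaDens (a+c+2) (a+2) u - betaDens (a+c+2) (a+1) u)
      = ∫ u in Ioo (0:ℝ) 1, ((quantile G u * betaDens (a+c+2) (a+2) u
        - quantile G u * betaDens (a+c+2) (a+1) u)
        - cst * (betaDens (a+c+2) (a+2) u - betaDens (a+c+2) (a+1) u)) := by
    congr 1; funext u; ring
  rw [hE, hC, integral_diff_zero, mul_zero, sub_zero] at hnn
  unfold muOS
  linarith

lemma muOS_mono (m : ℕ) (G : ℝ → ℝ) (hG : IsCDF G) (hGmean : HasFiniteMean G) :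
    ∀ j k : ℕ, 1 ≤ j → j ≤ k → k ≤ m → muOS m j G ≤ muOS m k G := by
  intro j k hj hjk hkm
  induction k, hjk using Nat.le_induction with
  | base => exact le_rfl
  | succ k hk ih =>
    exact (ih (by omega)).trans (muOS_step m G hG hGmean (hj.trans hk) hkm)

end QHAux

open QHAux

/-- The quantile function of `H_m(G)` is the step function `I_m(G^{-1})`: on each
interval `((j−1)/m, j/m]` it equals `μ_{j:m}(G)`; in particular `j ↦ μ_{j:m}(G)`
is nondecreasing. -/
theorem quantile_hoeffCDF
    (m : ℕ) (hm : 0 < m) (G : ℝ → ℝ) (hG : IsCDF G) (hGmean : HasFiniteMean G) :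
    (∀ j : ℕ, 1 ≤ j → j ≤ m → ∀ u : ℝ,
      ((j : ℝ) - 1) / m < u → u ≤ (j : ℝ) / m →
        quantile (hoeffCDF m G) u = muOS m j G) ∧
    (∀ j k : ℕ, 1 ≤ j → j ≤ k → k ≤ m → muOS m j G ≤ muOS m k G) := by
  refine ⟨?_, muOS_mono m G hG hGmean⟩
  intro j hj1 hjm u hu1 hu2
  have hmR : (0:ℝ) < (m:ℝ) := by exact_mod_cast hm
  classical
  have hmem : u ≤ hoeffCDF m G (muOS m j G) := by
    have hsum : (j:ℝ) ≤ ∑ i ∈ Finset.Icc 1 m, (if muOS m i G ≤ muOS m j G then (1:ℝ) else 0) := by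
      rw [Finset.sum_boole]
      have hsub : Finset.Icc 1 j ⊆ (Finset.Icc 1 m).filter (fun i => muOS m i G ≤ muOS m j G) := by
        intro i hi
        rw [Finset.mem_Icc] at hi
        rw [Finset.mem_filter, Finset.mem_Icc]
        exact ⟨⟨hi.1, hi.2.trans hjm⟩, muOS_mono m G hG hGmean i j hi.1 hi.2 hjm⟩
      have := Finset.card_le_card hsub
      rw [Nat.card_Icc] at this
      have : j ≤ ((Finset.Icc 1 m).filter (fun i => muOS m i G ≤ muOS m j G)).card := by omega
      exact_mod_cast this
    unfold hoeffCDF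
    calc u ≤ (j:ℝ)/m := hu2
      _ = (m:ℝ)⁻¹ * (j:ℝ) := by ring
      _ ≤ _ := mul_le_mul_of_nonneg_left hsum (by positivity)
  have hlb : ∀ x ∈ {x : ℝ | u ≤ hoeffCDF m G x}, muOS m j G ≤ x := by
    intro x hx
    by_contra hlt
    push_neg at hlt
    have hsum : ∑ i ∈ Finset.Icc 1 m, (if muOS m i G ≤ x then (1:ℝ) else 0) ≤ (j:ℝ) - 1 := by
      rw [Finset.sum_boole]
      have hsub : (Finset.Icc 1 m).filter (fun i => muOS m i G ≤ x) ⊆ Finset.Icc 1 (j-1) := by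
        intro i hi
        rw [Finset.mem_filter, Finset.mem_Icc] at hi
        rw [Finset.mem_Icc]
        refine ⟨hi.1.1, ?_⟩
        by_contra hij
        push_neg at hij
        have hji : j ≤ i := by omega
        have := muOS_mono m G hG hGmean j i hj1 hji hi.1.2
        linarith [hi.2]
      have := Finset.card_le_card hsub
      rw [Nat.card_Icc] at this
      have h2 : (((Finset.Icc 1 m).filter (fun i => muOS m i G ≤ x)).card : ℝ) ≤ ((j-1 : ℕ) : ℝ) := by
        exact_mod_cast (by omega : ((Finset.Icc 1 m).filter (fun i => muOS m i G ≤ x)).card ≤ j - 1)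
      calc (((Finset.Icc 1 m).filter (fun i => muOS m i G ≤ x)).card : ℝ)
          ≤ ((j-1 : ℕ) : ℝ) := h2
        _ = (j:ℝ) - 1 := by
            have : (1:ℕ) ≤ j := hj1
            push_cast [this]
            ring
    have hH : hoeffCDF m G x ≤ ((j:ℝ)-1)/m := by
      unfold hoeffCDF
      calc (m:ℝ)⁻¹ * ∑ i ∈ Finset.Icc 1 m, (if muOS m i G ≤ x then (1:ℝ) else 0)
          ≤ (m:ℝ)⁻¹ * ((j:ℝ)-1) := mul_le_mul_of_nonneg_left hsum (by positivity)
        _ = ((j:ℝ)-1)/m := by ring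
    have : u ≤ ((j:ℝ)-1)/m := le_trans hx hH
    linarith
  exact le_antisymm (csInf_le ⟨muOS m j G, hlb⟩ hmem) (le_csInf ⟨_, hmem⟩ hlb)
end
end

section
/- Fix a positive integer m and t ∈ (0,1). For j = 1, …, m let F_{B_{j:m}}(t) = ∫₀^t f_{B_{j:m}}(u) du denote the Beta(j, m−j+1) CDF, and let B be a binomial random variable with m trials and success probability t. Define W_m(t) = ∑_{j=1}^m ∫_{(j−1)/m}^{j/m} [ (1 − F_{B_{j:m}}(t)) · 1{x < t} + F_{B_{j:m}}(t) · 1{x > t} + 1{x = t} ] dx (the probability that a Beta(j, m−j+1) variable lies on the opposite side of t from x, integrated over x). Then W_m(t) = (1/m) · E|B − mt| = (1/m) ∑_{b=0}^m |b − mt| C(m,b) t^b (1−t)^{m−b}, and consequently W_m(t) ≤ √(t(1−t)/m). -/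
open MeasureTheory Filter Set
open scoped BoundedContinuousFunction ProbabilityTheory

noncomputable section

/-- The CDF of the Beta(j, m-j+1) distribution. -/
def betaCDF (m j : ℕ) (t : ℝ) : ℝ := ∫ u in (0:ℝ)..t, betaDens m j u

/-- The function `W_m(t)`: the probability that a Beta(j, m−j+1) variable lies on the
opposite side of `t` from `x`, integrated in `x` over `((j−1)/m, j/m]` and summed over `j`. -/
def Wfun (m : ℕ) (t : ℝ) : ℝ :=
  ∑ j ∈ Finset.Icc 1 m,
    ∫ x in Ioc (((j : ℝ) - 1) / m) ((j : ℝ) / m),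
      ((1 - betaCDF m j t) * (if x < t then (1:ℝ) else 0)
        + betaCDF m j t * (if t < x then (1:ℝ) else 0)
        + (if x = t then (1:ℝ) else 0))

lemma hasDerivAt_term (m k : ℕ) (hk : 1 ≤ k) (hkm : k ≤ m) (u : ℝ) :
    HasDerivAt (fun v : ℝ => (m.choose k : ℝ) * v ^ k * (1 - v) ^ (m - k))
      ((m.choose k : ℝ) * k * u ^ (k - 1) * (1 - u) ^ (m - k)
        - (m.choose (k+1) : ℝ) * (k+1) * u ^ k * (1 - u) ^ (m - (k+1))) u := by
  have h1 : HasDerivAt (fun v : ℝ => v ^ k) ((k : ℝ) * u ^ (k - 1)) u := hasDerivAt_pow k u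
  have h2 : HasDerivAt (fun v : ℝ => (1 - v) ^ (m - k))
      (((m - k : ℕ) : ℝ) * (1 - u) ^ (m - k - 1) * (-1)) u := by
    have hb : HasDerivAt (fun v : ℝ => 1 - v) (-1) u := by
      simpa using (hasDerivAt_id u).const_sub 1
    exact hb.pow (m - k)
  have h3 : HasDerivAt (fun v : ℝ => (m.choose k : ℝ) * v ^ k * (1 - v) ^ (m - k))
      ((m.choose k : ℝ) * ((k : ℝ) * u ^ (k - 1) * (1 - u) ^ (m - k)
        + u ^ k * (((m - k : ℕ) : ℝ) * (1 - u) ^ (m - k - 1) * (-1)))) u := by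
    simpa [mul_assoc] using (h1.mul h2).const_mul (m.choose k : ℝ)
  convert h3 using 1
  have hch : ((m.choose (k+1) : ℝ)) * ((k:ℝ)+1) = (m.choose k : ℝ) * ((m - k : ℕ) : ℝ) := by
    exact_mod_cast (Nat.choose_succ_right_eq m k)
  have hsub : m - (k + 1) = m - k - 1 := by omega
  rw [hsub]
  push_cast
  linear_combination (-(u ^ k * (1 - u) ^ (m - k - 1))) * hch

lemma sum_Icc_telescope (n : ℕ) (g : ℕ → ℝ) :
    ∑ j ∈ Finset.Icc 1 n, (g j - g (j-1)) = g n - g 0 := by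
  rw [← Finset.Ico_add_one_right_eq_Icc, Finset.sum_Ico_eq_sum_range]
  simp only [Nat.add_sub_cancel, Nat.add_sub_cancel_left, add_comm 1]
  simpa using Finset.sum_range_sub g n

lemma hasDerivAt_G (m j : ℕ) (hj : 1 ≤ j) (hjm : j ≤ m) (u : ℝ) :
    HasDerivAt (fun v : ℝ => ∑ k ∈ Finset.Icc j m, (m.choose k : ℝ) * v ^ k * (1 - v) ^ (m - k))
      (betaDens m j u) u := by
  have h := HasDerivAt.fun_sum (fun k hk => hasDerivAt_term m k
    (le_trans hj (Finset.mem_Icc.mp hk).1) (Finset.mem_Icc.mp hk).2 u)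
  refine h.congr_deriv ?_
  set φ : ℕ → ℝ := fun k => (m.choose k : ℝ) * k * u ^ (k - 1) * (1 - u) ^ (m - k) with hφ
  have hsum : ∑ k ∈ Finset.Icc j m, (φ k - φ (k+1)) = φ j - φ (m+1) := by
    rw [← Finset.Ico_add_one_right_eq_Icc, Finset.sum_Ico_eq_sum_range]
    have h2 := Finset.sum_range_sub' (fun i => φ (j + i)) (m + 1 - j)
    simp only [add_zero] at h2
    have h3 : ∑ i ∈ Finset.range (m + 1 - j), (φ (j + i) - φ (j + i + 1))
        = φ j - φ (j + (m + 1 - j)) := by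
      rw [← h2]
      exact Finset.sum_congr rfl (fun i _ => by rw [add_assoc])
    rw [h3, Nat.add_sub_cancel' (by omega)]
  have hφm : φ (m + 1) = 0 := by simp [hφ, Nat.choose_succ_self]
  have hφj : φ j = betaDens m j u := by
    simp only [hφ, betaDens]
    have hc : (m : ℝ) * ((m-1).choose (j-1) : ℝ) = (m.choose j : ℝ) * (j : ℝ) := by
      have h3 := Nat.add_one_mul_choose_eq (m - 1) (j - 1)
      have e1 : m - 1 + 1 = m := by omega
      have e2 : j - 1 + 1 = j := by omega
      rw [e1, e2] at h3
      exact_mod_cast h3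
    rw [hc]
    try ring
  have hbig : ∑ k ∈ Finset.Icc j m,
      ((m.choose k : ℝ) * k * u ^ (k - 1) * (1 - u) ^ (m - k)
        - (m.choose (k+1) : ℝ) * ((k:ℝ)+1) * u ^ k * (1 - u) ^ (m - (k+1)))
      = ∑ k ∈ Finset.Icc j m, (φ k - φ (k+1)) := by
    apply Finset.sum_congr rfl
    intro k _
    simp only [hφ]
    push_cast
    ring
  rw [← hφj, hbig, hsum, hφm, sub_zero]

lemma betaCDF_eq' (m j : ℕ) (hj : 1 ≤ j) (hjm : j ≤ m) (t : ℝ) :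
    (∫ u in (0:ℝ)..t, betaDens m j u)
      = ∑ k ∈ Finset.Icc j m, (m.choose k : ℝ) * t ^ k * (1 - t) ^ (m - k) := by
  have hcont : Continuous (betaDens m j) := by
    unfold betaDens; fun_prop
  have h := intervalIntegral.integral_eq_sub_of_hasDerivAt
    (f := fun v : ℝ => ∑ k ∈ Finset.Icc j m, (m.choose k : ℝ) * v ^ k * (1 - v) ^ (m - k))
    (f' := betaDens m j) (a := 0) (b := t)
    (fun x _ => hasDerivAt_G m j hj hjm x) (hcont.intervalIntegrable 0 t)
  have h0 : ∑ k ∈ Finset.Icc j m, (m.choose k : ℝ) * (0:ℝ) ^ k * (1 - (0:ℝ)) ^ (m - k) = 0 := by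
    apply Finset.sum_eq_zero
    intro k hk
    have hk1 : 1 ≤ k := le_trans hj (Finset.mem_Icc.mp hk).1
    simp [zero_pow (by omega : k ≠ 0)]
  rw [h]
  rw [show ∑ x ∈ Finset.Icc j m, (m.choose x : ℝ) * (0:ℝ) ^ x * (1 - (0:ℝ)) ^ (m - x) = 0 from h0, sub_zero]

lemma vol_lt (a b t : ℝ) (hab : a ≤ b) :
    (volume (Ioc a b ∩ Iio t)).toReal = min b t - min a t := by
  rcases le_or_gt t a with h | h
  · have : Ioc a b ∩ Iio t = ∅ := by
      ext x; simp only [mem_inter_iff, mem_Ioc, mem_Iio, mem_empty_iff_false, iff_false]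
      intro ⟨⟨h1, _⟩, h2⟩; linarith
    rw [this]
    simp [min_eq_right (h.trans hab), min_eq_right h]
  · rcases le_or_gt t b with h2 | h2
    · have : Ioc a b ∩ Iio t = Ioo a t := by
        ext x; simp only [mem_inter_iff, mem_Ioc, mem_Iio, mem_Ioo]
        constructor
        · rintro ⟨⟨h1, _⟩, h3⟩; exact ⟨h1, h3⟩
        · rintro ⟨h1, h3⟩; exact ⟨⟨h1, le_trans h3.le h2⟩, h3⟩
      rw [this, Real.volume_Ioo, ENNReal.toReal_ofReal (by linarith)]
      rw [min_eq_right h2, min_eq_left h.le]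
    · have : Ioc a b ∩ Iio t = Ioc a b := inter_eq_left.mpr (fun x hx => lt_of_le_of_lt hx.2 h2)
      rw [this, Real.volume_Ioc, ENNReal.toReal_ofReal (by linarith)]
      rw [min_eq_left h2.le, min_eq_left (hab.trans h2.le) ]

lemma vol_gt (a b t : ℝ) (hab : a ≤ b) :
    (volume (Ioc a b ∩ Ioi t)).toReal = max b t - max a t := by
  rcases le_or_gt t a with h | h
  · have : Ioc a b ∩ Ioi t = Ioc a b := inter_eq_left.mpr (fun x hx => lt_of_le_of_lt h hx.1)
    rw [this, Real.volume_Ioc, ENNReal.toReal_ofReal (by linarith)]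
    rw [max_eq_left (h.trans hab), max_eq_left h]
  · have : Ioc a b ∩ Ioi t = Ioc t b := by
      ext x; simp only [mem_inter_iff, mem_Ioc, mem_Ioi]
      constructor
      · rintro ⟨⟨_, h2⟩, h3⟩; exact ⟨h3, h2⟩
      · rintro ⟨h1, h2⟩; exact ⟨⟨lt_trans h h1, h2⟩, h1⟩
    rw [this, Real.volume_Ioc]
    rcases le_or_gt t b with h2 | h2
    · rw [ENNReal.toReal_ofReal (by linarith), max_eq_left h2, max_eq_right h.le]
    · rw [ENNReal.ofReal_eq_zero.mpr (by linarith : b - t ≤ 0)]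
      simp [max_eq_right h2.le, max_eq_right h.le]

lemma integral_piece (a b t p : ℝ) (hab : a ≤ b) :
    (∫ x in Ioc a b, ((1 - p) * (if x < t then (1:ℝ) else 0)
        + p * (if t < x then (1:ℝ) else 0) + (if x = t then (1:ℝ) else 0)))
      = (1 - p) * (min b t - min a t) + p * (max b t - max a t) := by
  have hconst : IntegrableOn (fun _ : ℝ => (1:ℝ)) (Ioc a b) volume :=
    integrableOn_const measure_Ioc_lt_top.ne
  have e1 : ∀ x : ℝ, (if x < t then (1:ℝ) else 0) = (Iio t).indicator (fun _ => (1:ℝ)) x := by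
    intro x; simp [Set.indicator_apply]
  have e2 : ∀ x : ℝ, (if t < x then (1:ℝ) else 0) = (Ioi t).indicator (fun _ => (1:ℝ)) x := by
    intro x; simp [Set.indicator_apply]
  have e3 : ∀ x : ℝ, (if x = t then (1:ℝ) else 0) = ({t} : Set ℝ).indicator (fun _ => (1:ℝ)) x := by
    intro x; simp [Set.indicator_apply]
  have hi1 : IntegrableOn ((Iio t).indicator (fun _ => (1:ℝ))) (Ioc a b) volume :=
    hconst.indicator measurableSet_Iio
  have hi2 : IntegrableOn ((Ioi t).indicator (fun _ => (1:ℝ))) (Ioc a b) volume :=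
    hconst.indicator measurableSet_Ioi
  have hi3 : IntegrableOn (({t} : Set ℝ).indicator (fun _ => (1:ℝ))) (Ioc a b) volume :=
    hconst.indicator (measurableSet_singleton t)
  simp only [e1, e2, e3]
  have L1 : (∫ x in Ioc a b, ((1 - p) * (Iio t).indicator (fun _ => (1:ℝ)) x
        + p * (Ioi t).indicator (fun _ => (1:ℝ)) x + ({t} : Set ℝ).indicator (fun _ => (1:ℝ)) x))
      = (∫ x in Ioc a b, ((1 - p) * (Iio t).indicator (fun _ => (1:ℝ)) x
          + p * (Ioi t).indicator (fun _ => (1:ℝ)) x))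
        + ∫ x in Ioc a b, ({t} : Set ℝ).indicator (fun _ => (1:ℝ)) x :=
    integral_add ((hi1.const_mul _).add (hi2.const_mul _)) hi3
  have L2 : (∫ x in Ioc a b, ((1 - p) * (Iio t).indicator (fun _ => (1:ℝ)) x
        + p * (Ioi t).indicator (fun _ => (1:ℝ)) x))
      = (∫ x in Ioc a b, (1 - p) * (Iio t).indicator (fun _ => (1:ℝ)) x)
        + ∫ x in Ioc a b, p * (Ioi t).indicator (fun _ => (1:ℝ)) x :=
    integral_add (hi1.const_mul _) (hi2.const_mul _)
  rw [L1, L2, MeasureTheory.integral_const_mul, MeasureTheory.integral_const_mul]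
  rw [setIntegral_indicator measurableSet_Iio, setIntegral_indicator measurableSet_Ioi,
      setIntegral_indicator (measurableSet_singleton t)]
  rw [setIntegral_const, setIntegral_const, setIntegral_const]
  have h3 : volume (Ioc a b ∩ {t}) = 0 :=
    measure_mono_null inter_subset_right (Real.volume_singleton)
  rw [measureReal_def, measureReal_def, measureReal_def, h3]
  simp only [smul_eq_mul, mul_one, ENNReal.toReal_zero, add_zero]
  rw [vol_lt a b t hab, vol_gt a b t hab]

lemma binom_sum (n : ℕ) (t : ℝ) :
    ∑ k ∈ Finset.range (n+1), (n.choose k : ℝ) * t ^ k * (1 - t) ^ (n - k) = 1 := by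
  have h := add_pow t (1 - t) n
  have h1 : t + (1 - t) = 1 := by ring
  rw [h1, one_pow] at h
  calc ∑ k ∈ Finset.range (n+1), (n.choose k : ℝ) * t ^ k * (1 - t) ^ (n - k)
      = ∑ k ∈ Finset.range (n+1), t ^ k * (1 - t) ^ (n - k) * (n.choose k : ℝ) :=
        Finset.sum_congr rfl fun k _ => by ring
    _ = 1 := h.symm

lemma binom_M1 (m : ℕ) (hm : 0 < m) (t : ℝ) :
    ∑ b ∈ Finset.range (m+1), (b : ℝ) * ((m.choose b : ℝ) * t ^ b * (1 - t) ^ (m - b))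
      = (m : ℝ) * t := by
  rw [Finset.sum_range_succ' _ m]
  simp only [Nat.cast_zero, zero_mul, add_zero]
  have key : ∀ c : ℕ, ((c:ℝ)+1) * (m.choose (c+1) : ℝ) = (m:ℝ) * ((m-1).choose c : ℝ) := by
    intro c
    have h := Nat.add_one_mul_choose_eq (m-1) c
    rw [show m - 1 + 1 = m from by omega] at h
    have := congrArg (Nat.cast (R := ℝ)) h
    push_cast at this
    linarith [this]
  have step : ∀ c ∈ Finset.range m, ((c+1 : ℕ) : ℝ) * ((m.choose (c+1) : ℝ) * t ^ (c+1) * (1 - t) ^ (m - (c+1)))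
      = (m:ℝ) * t * (((m-1).choose c : ℝ) * t ^ c * (1 - t) ^ ((m-1) - c)) := by
    intro c _
    rw [show m - (c+1) = (m-1) - c from by omega]
    push_cast
    calc ((c:ℝ)+1) * ((m.choose (c+1) : ℝ) * t ^ (c+1) * (1 - t) ^ ((m-1) - c))
        = (((c:ℝ)+1) * (m.choose (c+1) : ℝ)) * t ^ (c+1) * (1 - t) ^ ((m-1) - c) := by ring
      _ = ((m:ℝ) * ((m-1).choose c : ℝ)) * t ^ (c+1) * (1 - t) ^ ((m-1) - c) := by rw [key c]
      _ = (m:ℝ) * t * (((m-1).choose c : ℝ) * t ^ c * (1 - t) ^ ((m-1) - c)) := by ring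
  rw [Finset.sum_congr rfl step, ← Finset.mul_sum]
  have hb := binom_sum (m-1) t
  rw [show (m-1)+1 = m from by omega] at hb
  rw [hb, mul_one]

lemma binom_M2 (m : ℕ) (hm : 0 < m) (t : ℝ) :
    ∑ b ∈ Finset.range (m+1), (b : ℝ) * ((b:ℝ) - 1) * ((m.choose b : ℝ) * t ^ b * (1 - t) ^ (m - b))
      = (m : ℝ) * ((m:ℝ) - 1) * t ^ 2 := by
  rcases Nat.lt_or_ge m 2 with h2 | h2
  · interval_cases m
    · simp [Finset.sum_range_succ]
  · have key : ∀ c : ℕ, ((c:ℝ)+2) * ((c:ℝ)+1) * (m.choose (c+2) : ℝ)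
        = (m:ℝ) * ((m:ℝ)-1) * ((m-2).choose c : ℝ) := by
      intro c
      have k1 := congrArg (Nat.cast (R := ℝ)) (Nat.add_one_mul_choose_eq (m-1) (c+1))
      rw [show m - 1 + 1 = m from by omega, show c + 1 + 1 = c+2 from rfl] at k1
      have k2 := congrArg (Nat.cast (R := ℝ)) (Nat.add_one_mul_choose_eq (m-2) c)
      rw [show m - 2 + 1 = m-1 from by omega] at k2
      push_cast [Nat.cast_sub (by omega : 1 ≤ m)] at k1 k2
      linear_combination (-((c:ℝ)+1)) * k1 + (-(m:ℝ)) * k2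
    rw [Finset.sum_range_succ' _ m]
    simp only [Nat.cast_zero, zero_mul, mul_zero, zero_sub, add_zero]
    have e : ∀ N, N = m → (∑ i ∈ Finset.range N, ((i+1 : ℕ):ℝ) * (((i+1 : ℕ):ℝ) - 1)
          * ((m.choose (i+1) : ℝ) * t ^ (i+1) * (1 - t) ^ (m - (i+1))))
        = ∑ i ∈ Finset.range ((m-2)+1+1), ((i+1 : ℕ):ℝ) * (((i+1 : ℕ):ℝ) - 1)
          * ((m.choose (i+1) : ℝ) * t ^ (i+1) * (1 - t) ^ (m - (i+1))) := by
      intro N hN; rw [hN, show (m-2)+1+1 = m from by omega]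
    rw [e m rfl, Finset.sum_range_succ' _ ((m-2)+1)]
    have e1 : ((0+1 : ℕ):ℝ) * (((0+1 : ℕ):ℝ) - 1)
        * ((m.choose (0+1) : ℝ) * t ^ (0+1) * (1 - t) ^ (m - (0+1))) = 0 := by push_cast; ring
    rw [e1, add_zero]
    have step : ∀ i ∈ Finset.range ((m-2)+1),
        ((i+1+1 : ℕ):ℝ) * (((i+1+1 : ℕ):ℝ) - 1)
          * ((m.choose (i+1+1) : ℝ) * t ^ (i+1+1) * (1 - t) ^ (m - (i+1+1)))
        = (m:ℝ) * ((m:ℝ)-1) * t^2 * (((m-2).choose i : ℝ) * t ^ i * (1 - t) ^ ((m-2) - i)) := by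
      intro i _
      rw [show m - (i+1+1) = (m-2) - i from by omega]
      have hk := key i
      push_cast at hk ⊢
      linear_combination (t ^ (i+2) * (1 - t) ^ ((m-2) - i)) * hk
    rw [Finset.sum_congr rfl step, ← Finset.mul_sum]
    have hb := binom_sum (m-2) t
    rw [hb, mul_one]

lemma binom_var (m : ℕ) (hm : 0 < m) (t : ℝ) :
    ∑ b ∈ Finset.range (m+1), ((b : ℝ) - m * t)^2 * ((m.choose b : ℝ) * t ^ b * (1 - t) ^ (m - b))
      = (m : ℝ) * t * (1 - t) := by
  have expand : ∀ b ∈ Finset.range (m+1), ((b : ℝ) - m * t)^2 * ((m.choose b : ℝ) * t ^ b * (1 - t) ^ (m - b))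
      = (b:ℝ) * ((b:ℝ) - 1) * ((m.choose b : ℝ) * t ^ b * (1 - t) ^ (m - b))
        + (1 - 2*(m:ℝ)*t) * ((b:ℝ) * ((m.choose b : ℝ) * t ^ b * (1 - t) ^ (m - b)))
        + ((m:ℝ)*t)^2 * ((m.choose b : ℝ) * t ^ b * (1 - t) ^ (m - b)) := by
    intro b _; ring
  rw [Finset.sum_congr rfl expand, Finset.sum_add_distrib, Finset.sum_add_distrib,
      ← Finset.mul_sum, ← Finset.mul_sum, binom_M2 m hm t, binom_M1 m hm t, binom_sum m t]
  ring


lemma betaCDF_eq (m j : ℕ) (hj : 1 ≤ j) (hjm : j ≤ m) (t : ℝ) :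
    betaCDF m j t = ∑ k ∈ Finset.Icc j m, (m.choose k : ℝ) * t ^ k * (1 - t) ^ (m - k) :=
  betaCDF_eq' m j hj hjm t

lemma sum_Icc_eq_range_sub (m : ℕ) (f : ℕ → ℝ) :
    ∑ k ∈ Finset.Icc 1 m, f k = (∑ k ∈ Finset.range (m+1), f k) - f 0 := by
  rw [Finset.sum_range_succ' f m, ← Finset.Ico_add_one_right_eq_Icc, Finset.sum_Ico_eq_sum_range]
  simp only [Nat.add_sub_cancel, Nat.succ_sub_one]
  have h : ∑ i ∈ Finset.range m, f (1 + i) = ∑ i ∈ Finset.range m, f (i + 1) := by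
    exact Finset.sum_congr rfl fun i _ => by rw [add_comm]
  rw [h]; ring

lemma Wfun_repr (m : ℕ) (hm : 0 < m) (t : ℝ) (ht0 : 0 < t) (ht1 : t < 1) :
    Wfun m t = ∑ b ∈ Finset.range (m+1),
      ((m.choose b : ℝ) * t ^ b * (1 - t) ^ (m - b)) * |(b:ℝ)/m - t| := by
  have hm0 : (0:ℝ) < m := by exact_mod_cast hm
  have step1 : Wfun m t = ∑ j ∈ Finset.Icc 1 m,
      ((min ((j:ℝ)/m) t - min (((j-1 : ℕ):ℝ)/m) t)
        + (∑ k ∈ Finset.Icc j m, (m.choose k : ℝ) * t ^ k * (1 - t) ^ (m - k))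
          * (|(j:ℝ)/m - t| - |((j-1 : ℕ):ℝ)/m - t|)) := by
    unfold Wfun
    apply Finset.sum_congr rfl
    intro j hj
    obtain ⟨hj1, hjm⟩ := Finset.mem_Icc.mp hj
    have hcast : ((j:ℝ) - 1) = ((j - 1 : ℕ) : ℝ) := by
      rw [Nat.cast_sub hj1, Nat.cast_one]
    have hab : ((j - 1 : ℕ):ℝ)/m ≤ (j:ℝ)/m := by
      gcongr
      exact_mod_cast Nat.sub_le j 1
    rw [hcast, betaCDF_eq m j hj1 hjm t, integral_piece _ _ _ _ hab]
    rw [abs_sub_comm ((j:ℝ)/m) t, abs_sub_comm (((j-1:ℕ):ℝ)/m) t,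
      ← max_sub_min_eq_abs ((j:ℝ)/m) t, ← max_sub_min_eq_abs (((j-1:ℕ):ℝ)/m) t]
    ring
  rw [step1, Finset.sum_add_distrib]
  have step2 : ∑ j ∈ Finset.Icc 1 m,
      (min ((j:ℝ)/m) t - min (((j-1 : ℕ):ℝ)/m) t) = t := by
    rw [sum_Icc_telescope m (fun k => min ((k:ℝ)/m) t)]
    simp only [Nat.cast_zero, zero_div]
    rw [div_self (ne_of_gt hm0), min_eq_right (le_of_lt ht1), min_eq_left (le_of_lt ht0)]
    ring
  have step3 : ∑ j ∈ Finset.Icc 1 m,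
      ((∑ k ∈ Finset.Icc j m, (m.choose k : ℝ) * t ^ k * (1 - t) ^ (m - k))
        * (|(j:ℝ)/m - t| - |((j-1 : ℕ):ℝ)/m - t|))
      = ∑ k ∈ Finset.Icc 1 m, (((m.choose k : ℝ) * t ^ k * (1 - t) ^ (m - k)) * |(k:ℝ)/m - t|
          - ((m.choose k : ℝ) * t ^ k * (1 - t) ^ (m - k)) * t) := by
    have hswap : ∑ j ∈ Finset.Icc 1 m, ∑ k ∈ Finset.Icc j m,
        (((m.choose k : ℝ) * t ^ k * (1 - t) ^ (m - k))
          * (|(j:ℝ)/m - t| - |((j-1 : ℕ):ℝ)/m - t|))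
        = ∑ k ∈ Finset.Icc 1 m, ∑ j ∈ Finset.Icc 1 k,
          (((m.choose k : ℝ) * t ^ k * (1 - t) ^ (m - k))
            * (|(j:ℝ)/m - t| - |((j-1 : ℕ):ℝ)/m - t|)) := by
      apply Finset.sum_comm'
      intro j k
      simp only [Finset.mem_Icc]
      omega
    calc ∑ j ∈ Finset.Icc 1 m,
        ((∑ k ∈ Finset.Icc j m, (m.choose k : ℝ) * t ^ k * (1 - t) ^ (m - k))
          * (|(j:ℝ)/m - t| - |((j-1 : ℕ):ℝ)/m - t|))
        = ∑ j ∈ Finset.Icc 1 m, ∑ k ∈ Finset.Icc j m,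
          (((m.choose k : ℝ) * t ^ k * (1 - t) ^ (m - k))
            * (|(j:ℝ)/m - t| - |((j-1 : ℕ):ℝ)/m - t|)) := by
          exact Finset.sum_congr rfl fun j _ => Finset.sum_mul _ _ _
      _ = ∑ k ∈ Finset.Icc 1 m, ∑ j ∈ Finset.Icc 1 k,
          (((m.choose k : ℝ) * t ^ k * (1 - t) ^ (m - k))
            * (|(j:ℝ)/m - t| - |((j-1 : ℕ):ℝ)/m - t|)) := hswap
      _ = ∑ k ∈ Finset.Icc 1 m, (((m.choose k : ℝ) * t ^ k * (1 - t) ^ (m - k)) * |(k:ℝ)/m - t|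
            - ((m.choose k : ℝ) * t ^ k * (1 - t) ^ (m - k)) * t) := by
          apply Finset.sum_congr rfl
          intro k _
          rw [← Finset.mul_sum, sum_Icc_telescope k (fun i => |(i:ℝ)/m - t|)]
          simp only [Nat.cast_zero, zero_div, zero_sub, abs_neg, abs_of_pos ht0]
          ring
  rw [step2, step3, Finset.sum_sub_distrib, ← Finset.sum_mul]
  rw [sum_Icc_eq_range_sub m (fun k => ((m.choose k : ℝ) * t ^ k * (1 - t) ^ (m - k)) * |(k:ℝ)/m - t|)]
  rw [sum_Icc_eq_range_sub m (fun k => (m.choose k : ℝ) * t ^ k * (1 - t) ^ (m - k))]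
  rw [binom_sum m t]
  simp only [Nat.choose_zero_right, Nat.cast_one, pow_zero, Nat.sub_zero, Nat.cast_zero, zero_div,
    zero_sub, abs_neg, abs_of_pos ht0]
  ring

/-- Binomial representation and bound for `W_m(t)`:
`W_m(t) = (1/m) E|B − mt|` for `B ~ Bin(m, t)`, and `W_m(t) ≤ √(t(1−t)/m)`. -/
theorem Wfun_eq_binomial_and_bound
    (m : ℕ) (hm : 0 < m) (t : ℝ) (ht : t ∈ Ioo (0:ℝ) 1) :
    (Wfun m t = (m : ℝ)⁻¹ * ∑ b ∈ Finset.range (m + 1),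
        |(b : ℝ) - m * t| * (m.choose b : ℝ) * t ^ b * (1 - t) ^ (m - b)) ∧
    Wfun m t ≤ Real.sqrt (t * (1 - t) / m) := by
  obtain ⟨ht0, ht1⟩ := ht
  have hm0 : (0:ℝ) < m := by exact_mod_cast hm
  have hrepr := Wfun_repr m hm t ht0 ht1
  have habs : ∀ b : ℕ, |(b:ℝ)/m - t| = |(b:ℝ) - m * t| / m := by
    intro b
    rw [show (b:ℝ)/m - t = ((b:ℝ) - m * t)/m from by field_simp, abs_div, abs_of_pos hm0]
  have heq : Wfun m t = (m : ℝ)⁻¹ * ∑ b ∈ Finset.range (m + 1),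
      |(b : ℝ) - m * t| * (m.choose b : ℝ) * t ^ b * (1 - t) ^ (m - b) := by
    rw [hrepr, Finset.mul_sum]
    apply Finset.sum_congr rfl
    intro b _
    rw [habs b]
    field_simp
  refine ⟨heq, ?_⟩
  rw [hrepr]
  -- Cauchy-Schwarz
  have hqnn : ∀ b : ℕ, 0 ≤ (m.choose b : ℝ) * t ^ b * (1 - t) ^ (m - b) := by
    intro b
    exact mul_nonneg (mul_nonneg (Nat.cast_nonneg _) (pow_nonneg ht0.le b))
      (pow_nonneg (by linarith) _)
  have hcs := Finset.sum_mul_sq_le_sq_mul_sq (Finset.range (m+1))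
    (fun b => Real.sqrt ((m.choose b : ℝ) * t ^ b * (1 - t) ^ (m - b)))
    (fun b => Real.sqrt ((m.choose b : ℝ) * t ^ b * (1 - t) ^ (m - b)) * |(b:ℝ)/m - t|)
  have hfg : ∀ b ∈ Finset.range (m+1),
      Real.sqrt ((m.choose b : ℝ) * t ^ b * (1 - t) ^ (m - b))
        * (Real.sqrt ((m.choose b : ℝ) * t ^ b * (1 - t) ^ (m - b)) * |(b:ℝ)/m - t|)
      = ((m.choose b : ℝ) * t ^ b * (1 - t) ^ (m - b)) * |(b:ℝ)/m - t| := by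
    intro b _
    rw [← mul_assoc, Real.mul_self_sqrt (hqnn b)]
  have hf2 : ∀ b ∈ Finset.range (m+1),
      (Real.sqrt ((m.choose b : ℝ) * t ^ b * (1 - t) ^ (m - b)))^2
      = (m.choose b : ℝ) * t ^ b * (1 - t) ^ (m - b) := by
    intro b _
    exact Real.sq_sqrt (hqnn b)
  have hg2 : ∀ b ∈ Finset.range (m+1),
      (Real.sqrt ((m.choose b : ℝ) * t ^ b * (1 - t) ^ (m - b)) * |(b:ℝ)/m - t|)^2
      = ((m.choose b : ℝ) * t ^ b * (1 - t) ^ (m - b)) * ((b:ℝ)/m - t)^2 := by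
    intro b _
    rw [mul_pow, Real.sq_sqrt (hqnn b), sq_abs]
  rw [Finset.sum_congr rfl hfg, Finset.sum_congr rfl hf2, Finset.sum_congr rfl hg2,
    binom_sum m t, one_mul] at hcs
  -- variance computation
  have hvar : ∑ b ∈ Finset.range (m+1),
      ((m.choose b : ℝ) * t ^ b * (1 - t) ^ (m - b)) * ((b:ℝ)/m - t)^2
      = t * (1 - t) / m := by
    have : ∀ b ∈ Finset.range (m+1),
        ((m.choose b : ℝ) * t ^ b * (1 - t) ^ (m - b)) * ((b:ℝ)/m - t)^2
        = (m:ℝ)⁻¹^2 * (((b:ℝ) - m*t)^2 * ((m.choose b : ℝ) * t ^ b * (1 - t) ^ (m - b))) := by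
      intro b _
      rw [show (b:ℝ)/m - t = ((b:ℝ) - m * t)/m from by field_simp]
      field_simp
    rw [Finset.sum_congr rfl this, ← Finset.mul_sum, binom_var m hm t]
    field_simp
  rw [hvar] at hcs
  have hnn : 0 ≤ ∑ b ∈ Finset.range (m+1),
      ((m.choose b : ℝ) * t ^ b * (1 - t) ^ (m - b)) * |(b:ℝ)/m - t| :=
    Finset.sum_nonneg fun b _ => mul_nonneg (hqnn b) (abs_nonneg _)
  calc ∑ b ∈ Finset.range (m+1), ((m.choose b : ℝ) * t ^ b * (1 - t) ^ (m - b)) * |(b:ℝ)/m - t|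
      = Real.sqrt ((∑ b ∈ Finset.range (m+1),
          ((m.choose b : ℝ) * t ^ b * (1 - t) ^ (m - b)) * |(b:ℝ)/m - t|)^2) :=
        (Real.sqrt_sq hnn).symm
    _ ≤ Real.sqrt (t * (1 - t) / m) := Real.sqrt_le_sqrt hcs
end
end
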